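/- arXiv:1505.07903 — 2 statements merged into one kernel-verified Lean document; each statement's English description precedes it below -/
import Mathlib

section
/- Suppose (f_j^R, f_j^I) satisfy condition H1 with constants λ_j^{RR}, λ_j^{RI}, λ_j^{IR}, λ_j^{II} and (g_j^R, g_j^I) satisfy condition H2 with constants μ_j^{RR}, μ_j^{RI}, μ_j^{IR}, μ_j^{II}, for j = 1,…,n. Suppose there exist positive reals ξ_1,…,ξ_n, φ_1,…,φ_n such that for every j = 1,…,n both: (i) ξ_j(−d_j + (a_{jj}^R)⁺λ_j^{RR} + (−a_{jj}^I)⁺λ_j^{IR}) + Σ_{k≠j} ξ_k|a_{jk}^R|λ_k^{RR} + Σ_{k=1}^n φ_k|a_{jk}^R|λ_k^{RI} + Σ_{k≠j} ξ_k|a_{jk}^I|λ_k^{IR} + Σ_{k=1}^n φ_k|a_{jk}^I|λ_k^{II} + Σ_{k=1}^n ξ_k|b_{jk}^R|μ_k^{RR} + Σ_{k=1}^n φ_k|b_{jk}^R|μ_k^{RI} + Σ_{k=1}^n ξ_k|b_{jk}^I|μ_k^{IR} + Σ_{k=1}^n φ_k|b_{jk}^I|μ_k^{II} < 0, and (ii)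 φ_j(−d_j + (a_{jj}^R)⁺λ_j^{II} + (a_{jj}^I)⁺λ_j^{RI}) + Σ_{k=1}^n ξ_k|a_{jk}^R|λ_k^{IR} + Σ_{k≠j} φ_k|a_{jk}^R|λ_k^{II} + Σ_{k=1}^n ξ_k|a_{jk}^I|λ_k^{RR} + Σ_{k≠j} φ_k|a_{jk}^I|λ_k^{RI} + Σ_{k=1}^n ξ_k|b_{jk}^R|μ_k^{IR} + Σ_{k=1}^n φ_k|b_{jk}^R|μ_k^{II} + Σ_{k=1}^n ξ_k|b_{jk}^I|μ_k^{RR} + Σ_{k=1}^n φ_k|b_{jk}^I|μ_k^{RI} < 0. If the network admits at least one solution, then it has exactly one equilibrium Z̄ ∈ ℝ^{2n}, and for every solution Z(t) there exist constants c > 0 and δ > 0 such that ‖Z(t) − Z̄‖ ≤ c e^{−δt} (Euclidean norm) for all t ≥ 0. -/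
open Finset

/-- A solution of the delayed complex-valued network, decomposed into real and
imaginary parts. -/
def IsSolution (n : ℕ) (d : Fin n → ℝ)
    (aR aI bR bI τ : Fin n → Fin n → ℝ)
    (uR uI : Fin n → ℝ)
    (fR fI gR gI : Fin n → ℝ → ℝ → ℝ)
    (zR zI : Fin n → ℝ → ℝ) : Prop :=
  (∀ j, ContDiff ℝ 1 (zR j)) ∧ (∀ j, ContDiff ℝ 1 (zI j)) ∧
  (∀ j : Fin n, ∀ t : ℝ, 0 ≤ t →
    deriv (zR j) t =
      -(d j) * zR j t
      + (∑ k, (aR j k * fR k (zR k t) (zI k t) - aI j k * fI k (zR k t) (zI k t)))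
      + (∑ k, (bR j k * gR k (zR k (t - τ j k)) (zI k (t - τ j k))
               - bI j k * gI k (zR k (t - τ j k)) (zI k (t - τ j k))))
      + uR j) ∧
  (∀ j : Fin n, ∀ t : ℝ, 0 ≤ t →
    deriv (zI j) t =
      -(d j) * zI j t
      + (∑ k, (aR j k * fI k (zR k t) (zI k t) + aI j k * fR k (zR k t) (zI k t)))
      + (∑ k, (bR j k * gI k (zR k (t - τ j k)) (zI k (t - τ j k))
               + bI j k * gR k (zR k (t - τ j k)) (zI k (t - τ j k))))
      + uI j)

/-- An equilibrium of the network: a point of ℝ^{2n} at which both right-hand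
sides vanish. -/
def IsEquilibrium (n : ℕ) (d : Fin n → ℝ)
    (aR aI bR bI : Fin n → Fin n → ℝ)
    (uR uI : Fin n → ℝ)
    (fR fI gR gI : Fin n → ℝ → ℝ → ℝ)
    (zbR zbI : Fin n → ℝ) : Prop :=
  (∀ j : Fin n,
    -(d j) * zbR j
    + (∑ k, (aR j k * fR k (zbR k) (zbI k) - aI j k * fI k (zbR k) (zbI k)))
    + (∑ k, (bR j k * gR k (zbR k) (zbI k) - bI j k * gI k (zbR k) (zbI k)))
    + uR j = 0) ∧
  (∀ j : Fin n,
    -(d j) * zbI j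
    + (∑ k, (aR j k * fI k (zbR k) (zbI k) + aI j k * fR k (zbR k) (zbI k)))
    + (∑ k, (bR j k * gI k (zbR k) (zbI k) + bI j k * gR k (zbR k) (zbI k)))
    + uI j = 0)

/-- Condition H1: continuously differentiable with positive, bounded partial
derivatives. -/
def CondH1 (f1 f2 : ℝ → ℝ → ℝ) (lRR lRI lIR lII : ℝ) : Prop :=
  ContDiff ℝ 1 (fun p : ℝ × ℝ => f1 p.1 p.2) ∧
  ContDiff ℝ 1 (fun p : ℝ × ℝ => f2 p.1 p.2) ∧
  (∀ x y : ℝ,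
    (0 < deriv (fun s => f1 s y) x ∧ deriv (fun s => f1 s y) x ≤ lRR) ∧
    (0 < deriv (fun s => f1 x s) y ∧ deriv (fun s => f1 x s) y ≤ lRI) ∧
    (0 < deriv (fun s => f2 s y) x ∧ deriv (fun s => f2 s y) x ≤ lIR) ∧
    (0 < deriv (fun s => f2 x s) y ∧ deriv (fun s => f2 x s) y ≤ lII))

/-- Condition H2: continuously differentiable with bounded partial derivatives. -/
def CondH2 (g1 g2 : ℝ → ℝ → ℝ) (mRR mRI mIR mII : ℝ) : Prop :=
  ContDiff ℝ 1 (fun p : ℝ × ℝ => g1 p.1 p.2) ∧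
  ContDiff ℝ 1 (fun p : ℝ × ℝ => g2 p.1 p.2) ∧
  (∀ x y : ℝ,
    |deriv (fun s => g1 s y) x| ≤ mRR ∧
    |deriv (fun s => g1 x s) y| ≤ mRI ∧
    |deriv (fun s => g2 s y) x| ≤ mIR ∧
    |deriv (fun s => g2 x s) y| ≤ mII)

open Set

/-- MVT slope decomposition. -/
lemma slope_decomp (f : ℝ → ℝ) (hf : Differentiable ℝ f) (lo hi : ℝ)
    (hlohi : lo ≤ hi) (hb : ∀ c, lo ≤ deriv f c ∧ deriv f c ≤ hi) (x x' : ℝ) :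
    ∃ α, lo ≤ α ∧ α ≤ hi ∧ f x - f x' = α * (x - x') := by
  rcases lt_trichotomy x' x with h | h | h
  · obtain ⟨c, _, hc⟩ := exists_deriv_eq_slope f h (hf.continuous.continuousOn)
      (hf.differentiableOn)
    refine ⟨deriv f c, (hb c).1, (hb c).2, ?_⟩
    rw [hc, div_mul_cancel₀]
    exact sub_ne_zero.2 h.ne'
  · exact ⟨lo, le_rfl, hlohi, by rw [h]; ring⟩
  · obtain ⟨c, _, hc⟩ := exists_deriv_eq_slope f h (hf.continuous.continuousOn)
      (hf.differentiableOn)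
    refine ⟨deriv f c, (hb c).1, (hb c).2, ?_⟩
    rw [hc]
    have hne : x' - x ≠ 0 := sub_ne_zero.2 h.ne'
    field_simp
    ring

/-- If `f t ≤ f b` on `[a,b]`, `a < b`, `f` differentiable at `b`, then `0 ≤ deriv f b`. -/
lemma deriv_nonneg_of_isMaxOn_right (f : ℝ → ℝ) (a b : ℝ) (hab : a < b)
    (hd : DifferentiableAt ℝ f b) (hmax : ∀ t, a ≤ t → t ≤ b → f t ≤ f b) :
    0 ≤ deriv f b := by
  have H := hd.hasDerivAt
  rw [hasDerivAt_iff_tendsto_slope] at H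
  have H' : Filter.Tendsto (slope f b) (nhdsWithin b (Iio b)) (nhds (deriv f b)) :=
    H.mono_left (nhdsWithin_mono b (fun x hx => ne_of_lt hx))
  refine ge_of_tendsto H' ?_
  filter_upwards [Ioo_mem_nhdsLT_of_mem (⟨hab, le_rfl⟩ : b ∈ Ioc a b)] with x hx
  have h1 : f x - f b ≤ 0 := sub_nonpos.2 (hmax x hx.1.le hx.2.le)
  have h2 : x - b < 0 := sub_neg.2 hx.2
  have : slope f b x = (f x - f b) / (x - b) := by simp [slope_def_field]
  rw [this]
  rw [div_nonneg_iff]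
  exact Or.inr ⟨h1, h2.le⟩

lemma diag_bound (a α u L : ℝ) (h0 : 0 ≤ α) (hL : α ≤ L) (hu : 0 ≤ u) :
    a * (α * u) ≤ max a 0 * L * u := by
  rcases le_or_gt a 0 with h | h
  · have : a * (α * u) ≤ 0 := mul_nonpos_of_nonpos_of_nonneg h (by positivity)
    have h2 : (0:ℝ) ≤ max a 0 * L * u := by
      have : (0:ℝ) ≤ max a 0 := le_max_right _ _
      have hL0 : 0 ≤ L := le_trans h0 hL
      positivity
    linarith
  · have : max a 0 = a := max_eq_left h.le
    rw [this]
    have h1 : α * u ≤ L * u := mul_le_mul_of_nonneg_right hL hu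
    nlinarith

lemma offdiag_bound (a α v L W σ : ℝ) (hα : |α| ≤ L) (hv : |v| ≤ W) (hσ : |σ| = 1) :
    σ * (a * (α * v)) ≤ |a| * L * W := by
  calc σ * (a * (α * v)) ≤ |σ * (a * (α * v))| := le_abs_self _
    _ = |a| * (|α| * |v|) := by rw [abs_mul, abs_mul, abs_mul, hσ, one_mul]
    _ ≤ |a| * (L * W) := by
        have h0 : (0:ℝ) ≤ |v| := abs_nonneg _
        have : |α| * |v| ≤ L * W :=
          mul_le_mul hα hv h0 (le_trans (abs_nonneg _) hα)
        exact mul_le_mul_of_nonneg_left this (abs_nonneg _)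
    _ = |a| * L * W := by ring

lemma diff_fst (f : ℝ → ℝ → ℝ) (hf : ContDiff ℝ 1 (fun p : ℝ × ℝ => f p.1 p.2)) (y : ℝ) :
    Differentiable ℝ (fun s => f s y) :=
  (hf.differentiable one_ne_zero).comp (differentiable_id.prodMk (differentiable_const y))

lemma diff_snd (f : ℝ → ℝ → ℝ) (hf : ContDiff ℝ 1 (fun p : ℝ × ℝ => f p.1 p.2)) (x : ℝ) :
    Differentiable ℝ (fun s => f x s) :=
  (hf.differentiable one_ne_zero).comp ((differentiable_const x).prodMk differentiable_id)

lemma exists_delta {ι : Type*} [Fintype ι] [Nonempty ι] (A B w : ι → ℝ) (τb : ℝ)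
    (hAB : ∀ i, A i + B i < 0) :
    ∃ δ : ℝ, 0 < δ ∧ ∀ i, A i + Real.exp (δ * τb) * B i + δ * w i < 0 := by
  have hev : ∀ᶠ δ in nhdsWithin (0:ℝ) (Set.Ioi 0),
      ∀ i, A i + Real.exp (δ * τb) * B i + δ * w i < 0 := by
    rw [Filter.eventually_all]
    intro i
    have hcont : Filter.Tendsto (fun δ : ℝ => A i + Real.exp (δ * τb) * B i + δ * w i)
        (nhdsWithin 0 (Set.Ioi 0)) (nhds (A i + B i)) := by
      apply Filter.Tendsto.mono_left _ nhdsWithin_le_nhds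
      have : Continuous (fun δ : ℝ => A i + Real.exp (δ * τb) * B i + δ * w i) :=
        (continuous_const.add ((Real.continuous_exp.comp
          (continuous_id.mul continuous_const)).mul continuous_const)).add
          (continuous_id.mul continuous_const)
      have h0 := this.tendsto 0
      simpa using h0
    exact hcont.eventually_lt_const (hAB i)
  obtain ⟨δ, hmem, hδprop⟩ := (eventually_mem_nhdsWithin.and hev).exists
  exact ⟨δ, hmem, hδprop⟩

set_option maxHeartbeats 1000000 in
lemma halanay {P : Type*} [Fintype P] [Nonempty P]
    (w : P → ℝ) (hw : ∀ p, 0 < w p)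
    (E : P → ℝ → ℝ) (hE : ∀ p, Differentiable ℝ (E p))
    (τb : ℝ) (hτb : 0 ≤ τb)
    (A B : P → ℝ) (δ : ℝ) (hδ : 0 < δ)
    (hAB : ∀ p, A p + Real.exp (δ * τb) * B p + δ * w p < 0)
    (M : ℝ)
    (hM : ∀ p, ∀ s, -τb ≤ s → s ≤ 0 → |E p s| ≤ w p * M)
    (hest : ∀ p t, 0 < t → ∀ σ Q Qd : ℝ, |σ| = 1 → 0 < Q → Q ≤ Qd →
      (∀ q, |E q t| ≤ w q * Q) →
      (∀ q s, t - τb ≤ s → s ≤ t → |E q s| ≤ w q * Qd) →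
      σ * E p t = w p * Q →
      σ * deriv (E p) t ≤ A p * Q + B p * Qd) :
    ∀ t, 0 ≤ t → ∀ p, |E p t| ≤ w p * (M * Real.exp (-δ * t)) := by
  have hM0 : 0 ≤ M := by
    obtain p := Classical.arbitrary P
    nlinarith [hM p 0 (neg_nonpos.2 hτb) le_rfl, abs_nonneg (E p 0), hw p]
  suffices h : ∀ η, 0 < η → ∀ t, 0 ≤ t → ∀ p, |E p t| ≤ w p * ((M + η) * Real.exp (-δ * t)) by
    intro t ht p
    apply le_of_forall_pos_le_add
    intro ε hε
    have hwe : 0 < w p * Real.exp (-δ * t) := mul_pos (hw p) (Real.exp_pos _)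
    have := h (ε / (w p * Real.exp (-δ * t))) (div_pos hε hwe) t ht p
    have hw1 : w p ≠ 0 := (hw p).ne'
    have hw2 : Real.exp (-δ * t) ≠ 0 := (Real.exp_pos _).ne'
    calc |E p t| ≤ w p * ((M + ε / (w p * Real.exp (-δ * t))) * Real.exp (-δ * t)) := this
      _ = w p * (M * Real.exp (-δ * t)) + ε := by field_simp
  intro η hη
  set b : ℝ → ℝ := fun t => (M + η) * Real.exp (-δ * t) with hbdef
  have hbcont : Continuous b :=
    continuous_const.mul (Real.continuous_exp.comp (continuous_const.mul continuous_id))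
  have hbpos : ∀ t, 0 < b t := by
    intro t
    have h1 : 0 < M + η := by linarith
    positivity
  set C : Set ℝ := {t | ∀ p, |E p t| ≤ w p * b t} with hC
  have hCclosed : IsClosed C := by
    have hCeq : C = ⋂ p, {t | |E p t| ≤ w p * b t} := by
      ext t; simp [hC, Set.mem_iInter]
    rw [hCeq]
    refine isClosed_iInter fun p => isClosed_le ?_ ?_
    · exact continuous_abs.comp (hE p).continuous
    · exact continuous_const.mul hbcont
  set m : ℝ → ℝ := fun t => Finset.univ.inf' Finset.univ_nonempty
      (fun p => w p * b t - |E p t|) with hm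
  have hmcont : Continuous m := by
    apply Continuous.finset_inf'_apply
    intro p _
    exact (continuous_const.mul hbcont).sub (continuous_abs.comp (hE p).continuous)
  have hmC : ∀ t, t ∈ C ↔ 0 ≤ m t := by
    intro t
    constructor
    · intro h
      apply Finset.le_inf'
      intro p _
      linarith [h p]
    · intro h p
      have h2 := Finset.inf'_le (fun p => w p * b t - |E p t|) (Finset.mem_univ p)
      simp only [hm] at h
      linarith
  have h0C : 0 < m 0 := by
    rw [hm]
    rw [Finset.lt_inf'_iff]
    intro p _
    have h1 := hM p 0 (neg_nonpos.2 hτb) le_rfl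
    have hb0 : b 0 = M + η := by simp [hbdef]
    rw [hb0]
    nlinarith [hw p]
  set S : Set ℝ := {t | 0 ≤ t ∧ t ∉ C} with hS
  suffices hSempty : S = ∅ by
    intro t ht p
    by_contra hcc
    push_neg at hcc
    have hmem : t ∈ S := ⟨ht, fun hmem => absurd (hmem p) (not_le.2 hcc)⟩
    rw [hSempty] at hmem
    exact hmem
  by_contra hne
  have hSne : S.Nonempty := Set.nonempty_iff_ne_empty.2 hne
  have hSbdd : BddBelow S := ⟨0, fun x hx => hx.1⟩
  set t0 := sInf S with ht0def
  have ht0cl : t0 ∈ closure S := csInf_mem_closure hSne hSbdd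
  have ht00 : 0 ≤ t0 := le_csInf hSne fun x hx => hx.1
  have hpre : ∀ s, 0 ≤ s → s < t0 → s ∈ C := by
    intro s hs hst
    by_contra hcc
    exact absurd (csInf_le hSbdd ⟨hs, hcc⟩) (not_le.2 hst)
  have hmneg : ∀ s ∈ S, m s ≤ 0 := by
    intro s hs
    by_contra hcc
    exact hs.2 ((hmC s).2 (le_of_lt (not_le.1 hcc)))
  have hmt0 : m t0 ≤ 0 := by
    have hcl : closure S ⊆ {t | m t ≤ 0} := by
      apply closure_minimal _ (isClosed_le hmcont continuous_const)
      exact hmneg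
    exact hcl ht0cl
  have ht0pos : 0 < t0 := by
    rcases eq_or_lt_of_le ht00 with h | h
    · exfalso; rw [← h] at hmt0; linarith
    · exact h
  have ht0C : t0 ∈ C := by
    have hcl : t0 ∈ closure (Set.Ico 0 t0) := by
      rw [closure_Ico (ne_of_lt ht0pos)]
      exact ⟨ht00, le_rfl⟩
    have hsub : Set.Ico 0 t0 ⊆ C := fun s hs => hpre s hs.1 hs.2
    exact hCclosed.closure_subset (closure_mono hsub hcl)
  have hmt0' : m t0 = 0 := le_antisymm hmt0 ((hmC t0).1 ht0C)
  have hbnd : ∀ s, 0 ≤ s → s ≤ t0 → ∀ p, |E p s| ≤ w p * b s := by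
    intro s hs hst p
    rcases eq_or_lt_of_le hst with h | h
    · rw [h]; exact ht0C p
    · exact hpre s hs h p
  obtain ⟨p, _, hp⟩ := Finset.exists_mem_eq_inf' (Finset.univ_nonempty)
      (fun p => w p * b t0 - |E p t0|)
  have hpeq : |E p t0| = w p * b t0 := by
    have : m t0 = w p * b t0 - |E p t0| := hp
    rw [hmt0'] at this
    linarith
  set σ : ℝ := if 0 ≤ E p t0 then 1 else -1 with hσdef
  have hσ : |σ| = 1 := by
    rw [hσdef]; split <;> simp
  have hσE : σ * E p t0 = |E p t0| := by
    rw [hσdef]; split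
    · rw [abs_of_nonneg ‹_›]; ring
    · rw [abs_of_neg (not_le.1 ‹_›)]; ring
  set Q : ℝ := b t0 with hQdef
  set Qd : ℝ := Real.exp (δ * τb) * Q with hQddef
  have hQpos : 0 < Q := hbpos t0
  have hbt0 : b t0 = (M + η) * Real.exp (-δ * t0) := rfl
  have hQval : Q = (M + η) * Real.exp (-δ * t0) := hbt0
  have hQQd : Q ≤ Qd := by
    rw [hQddef]
    nlinarith [Real.one_le_exp (mul_nonneg hδ.le hτb), hQpos]
  have hinst : ∀ q, |E q t0| ≤ w q * Q := fun q => ht0C q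
  have hdel : ∀ q s, t0 - τb ≤ s → s ≤ t0 → |E q s| ≤ w q * Qd := by
    intro q s h1 h2
    have hbs : b s = (M + η) * Real.exp (-δ * s) := rfl
    rcases le_or_gt 0 s with hs | hs
    · calc |E q s| ≤ w q * b s := hbnd s hs h2 q
        _ ≤ w q * Qd := by
            apply mul_le_mul_of_nonneg_left _ (hw q).le
            rw [hbs, hQddef, hQval]
            have hexp : Real.exp (-δ * s) ≤ Real.exp (δ * τb) * Real.exp (-δ * t0) := by
              rw [← Real.exp_add]
              apply Real.exp_le_exp.2
              nlinarith
            nlinarith [Real.exp_pos (-δ * s), hM0, hη]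
    · have h3 : -τb ≤ s := by linarith
      calc |E q s| ≤ w q * M := hM q s h3 hs.le
        _ ≤ w q * Qd := by
            apply mul_le_mul_of_nonneg_left _ (hw q).le
            rw [hQddef, hQval]
            have h4 : t0 < τb := by linarith
            have hone : (1:ℝ) ≤ Real.exp (δ * τb) * Real.exp (-δ * t0) := by
              rw [← Real.exp_add]
              have : 0 ≤ δ * τb + -δ * t0 := by nlinarith
              exact Real.one_le_exp this
            nlinarith [hone, hM0, hη]
  have hmax : σ * E p t0 = w p * Q := by rw [hσE, hpeq, hQdef]
  have hder := hest p t0 ht0pos σ Q Qd hσ hQpos hQQd hinst hdel hmax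
  clear_value b m t0 σ Q Qd
  -- other side: deriv of F := σ E p - w p * b is ≥ 0 at t0
  have hbder : HasDerivAt b ((M + η) * (Real.exp (-δ * t0) * -δ)) t0 := by
    rw [hbdef]
    have h1 : HasDerivAt (fun t : ℝ => -δ * t) (-δ) t0 := by
      simpa using (hasDerivAt_id t0).const_mul (-δ)
    have h2 : HasDerivAt (fun t : ℝ => Real.exp (-δ * t)) (Real.exp (-δ * t0) * -δ) t0 := by
      simpa [Function.comp_def] using (Real.hasDerivAt_exp (-δ * t0)).comp t0 h1
    exact h2.const_mul (M + η)
  have hFder : HasDerivAt (fun t => σ * E p t - w p * b t)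
      (σ * deriv (E p) t0 - w p * ((M + η) * (Real.exp (-δ * t0) * -δ))) t0 :=
    (((hE p) t0).hasDerivAt.const_mul σ).sub (hbder.const_mul (w p))
  have hF0 : 0 ≤ deriv (fun t => σ * E p t - w p * b t) t0 := by
    apply deriv_nonneg_of_isMaxOn_right _ 0 t0 ht0pos hFder.differentiableAt
    intro t h1 h2
    have hFt0 : σ * E p t0 - w p * b t0 = 0 := by
      rw [hσE, hpeq, hQdef]; ring
    have h3 : σ * E p t ≤ |E p t| := by
      calc σ * E p t ≤ |σ * E p t| := le_abs_self _
        _ = |E p t| := by rw [abs_mul, hσ, one_mul]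
    have h4 := hbnd t h1 h2 p
    rw [hFt0]
    linarith
  rw [hFder.deriv] at hF0
  have hQdQ : B p * Qd = Real.exp (δ * τb) * B p * Q := by rw [hQddef]; ring
  have hfinal' : A p * Q + B p * Qd + δ * (w p * Q) < 0 := by
    rw [hQdQ]
    nlinarith [mul_neg_of_neg_of_pos (hAB p) hQpos]
  have hF0' : -(δ * (w p * Q)) ≤ σ * deriv (E p) t0 := by
    have e1 : w p * ((M + η) * (Real.exp (-δ * t0) * -δ)) = -(δ * (w p * Q)) := by
      rw [hQval]; ring
    linarith [hF0, e1.le, e1.ge]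
  linarith [hder, hF0', hfinal']

lemma H1_decomp (f1 f2 : ℝ → ℝ → ℝ) (lRR lRI lIR lII : ℝ)
    (h : CondH1 f1 f2 lRR lRI lIR lII) (x y x' y' : ℝ) :
    ∃ α β γ ε : ℝ, 0 ≤ α ∧ α ≤ lRR ∧ 0 ≤ β ∧ β ≤ lRI ∧ 0 ≤ γ ∧ γ ≤ lIR ∧ 0 ≤ ε ∧ ε ≤ lII ∧
      f1 x y - f1 x' y' = α * (x - x') + β * (y - y') ∧
      f2 x y - f2 x' y' = γ * (x - x') + ε * (y - y') := by
  obtain ⟨hc1, hc2, hb⟩ := h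
  have hRR : 0 ≤ lRR := le_of_lt (lt_of_lt_of_le ((hb 0 0).1.1) ((hb 0 0).1.2))
  have hRI : 0 ≤ lRI := le_of_lt (lt_of_lt_of_le ((hb 0 0).2.1.1) ((hb 0 0).2.1.2))
  have hIR : 0 ≤ lIR := le_of_lt (lt_of_lt_of_le ((hb 0 0).2.2.1.1) ((hb 0 0).2.2.1.2))
  have hII : 0 ≤ lII := le_of_lt (lt_of_lt_of_le ((hb 0 0).2.2.2.1) ((hb 0 0).2.2.2.2))
  obtain ⟨α, hα0, hαl, hαeq⟩ := slope_decomp (fun s => f1 s y) (diff_fst f1 hc1 y) 0 lRR hRR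
    (fun c => ⟨((hb c y).1.1).le, (hb c y).1.2⟩) x x'
  obtain ⟨β, hβ0, hβl, hβeq⟩ := slope_decomp (fun s => f1 x' s) (diff_snd f1 hc1 x') 0 lRI hRI
    (fun c => ⟨((hb x' c).2.1.1).le, (hb x' c).2.1.2⟩) y y'
  obtain ⟨γ, hγ0, hγl, hγeq⟩ := slope_decomp (fun s => f2 s y) (diff_fst f2 hc2 y) 0 lIR hIR
    (fun c => ⟨((hb c y).2.2.1.1).le, (hb c y).2.2.1.2⟩) x x'
  obtain ⟨ε, hε0, hεl, hεeq⟩ := slope_decomp (fun s => f2 x' s) (diff_snd f2 hc2 x') 0 lII hII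
    (fun c => ⟨((hb x' c).2.2.2.1).le, (hb x' c).2.2.2.2⟩) y y'
  exact ⟨α, β, γ, ε, hα0, hαl, hβ0, hβl, hγ0, hγl, hε0, hεl,
    by linarith [hαeq, hβeq], by linarith [hγeq, hεeq]⟩

lemma H2_decomp (g1 g2 : ℝ → ℝ → ℝ) (mRR mRI mIR mII : ℝ)
    (h : CondH2 g1 g2 mRR mRI mIR mII) (x y x' y' : ℝ) :
    ∃ α β γ ε : ℝ, |α| ≤ mRR ∧ |β| ≤ mRI ∧ |γ| ≤ mIR ∧ |ε| ≤ mII ∧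
      g1 x y - g1 x' y' = α * (x - x') + β * (y - y') ∧
      g2 x y - g2 x' y' = γ * (x - x') + ε * (y - y') := by
  obtain ⟨hc1, hc2, hb⟩ := h
  have hRR : -mRR ≤ mRR := by have := abs_nonneg (deriv (fun s => g1 s 0) 0); have := (hb 0 0).1; linarith
  have hRI : -mRI ≤ mRI := by have := abs_nonneg (deriv (fun s => g1 0 s) 0); have := (hb 0 0).2.1; linarith
  have hIR : -mIR ≤ mIR := by have := abs_nonneg (deriv (fun s => g2 s 0) 0); have := (hb 0 0).2.2.1; linarith
  have hII : -mII ≤ mII := by have := abs_nonneg (deriv (fun s => g2 0 s) 0); have := (hb 0 0).2.2.2; linarith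
  obtain ⟨α, hα0, hαl, hαeq⟩ := slope_decomp (fun s => g1 s y) (diff_fst g1 hc1 y) (-mRR) mRR hRR
    (fun c => abs_le.1 ((hb c y).1)) x x'
  obtain ⟨β, hβ0, hβl, hβeq⟩ := slope_decomp (fun s => g1 x' s) (diff_snd g1 hc1 x') (-mRI) mRI hRI
    (fun c => abs_le.1 ((hb x' c).2.1)) y y'
  obtain ⟨γ, hγ0, hγl, hγeq⟩ := slope_decomp (fun s => g2 s y) (diff_fst g2 hc2 y) (-mIR) mIR hIR
    (fun c => abs_le.1 ((hb c y).2.2.1)) x x'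
  obtain ⟨ε, hε0, hεl, hεeq⟩ := slope_decomp (fun s => g2 x' s) (diff_snd g2 hc2 x') (-mII) mII hII
    (fun c => abs_le.1 ((hb x' c).2.2.2)) y y'
  exact ⟨α, β, γ, ε, abs_le.2 ⟨hα0, hαl⟩, abs_le.2 ⟨hβ0, hβl⟩, abs_le.2 ⟨hγ0, hγl⟩,
    abs_le.2 ⟨hε0, hεl⟩, by linarith [hαeq, hβeq], by linarith [hγeq, hεeq]⟩

set_option maxHeartbeats 1000000 in
lemma est_R (n : ℕ) (d : Fin n → ℝ) (aR aI bR bI τ : Fin n → Fin n → ℝ)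
    (uR uI : Fin n → ℝ) (fR fI gR gI : Fin n → ℝ → ℝ → ℝ)
    (lRR lRI lIR lII mRR mRI mIR mII : Fin n → ℝ)
    (hf : ∀ j, CondH1 (fR j) (fI j) (lRR j) (lRI j) (lIR j) (lII j))
    (hg : ∀ j, CondH2 (gR j) (gI j) (mRR j) (mRI j) (mIR j) (mII j))
    (ξ φ : Fin n → ℝ) (hξ : ∀ k, 0 < ξ k) (hφ : ∀ k, 0 < φ k)
    (zR zI wR wI : Fin n → ℝ → ℝ)
    (hz : IsSolution n d aR aI bR bI τ uR uI fR fI gR gI zR zI)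
    (hw : IsSolution n d aR aI bR bI τ uR uI fR fI gR gI wR wI)
    (τb : ℝ) (hτ0 : ∀ j k, 0 ≤ τ j k) (hτb : ∀ j k, τ j k ≤ τb)
    (j : Fin n) (t : ℝ) (ht : 0 ≤ t) (σ Q Qd : ℝ) (hσ : |σ| = 1) (hQ : 0 ≤ Q)
    (hinst : ∀ k, |zR k t - wR k t| ≤ ξ k * Q ∧ |zI k t - wI k t| ≤ φ k * Q)
    (hdel : ∀ k s, t - τb ≤ s → s ≤ t → |zR k s - wR k s| ≤ ξ k * Qd ∧ |zI k s - wI k s| ≤ φ k * Qd)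
    (hmax : σ * (zR j t - wR j t) = ξ j * Q) :
    σ * deriv (fun s => zR j s - wR j s) t ≤
      (ξ j * (-(d j) + max (aR j j) 0 * lRR j + max (-(aI j j)) 0 * lIR j)
       + (∑ k ∈ Finset.univ.erase j, ξ k * |aR j k| * lRR k)
       + (∑ k, φ k * |aR j k| * lRI k)
       + (∑ k ∈ Finset.univ.erase j, ξ k * |aI j k| * lIR k)
       + (∑ k, φ k * |aI j k| * lII k)) * Q
      + ((∑ k, ξ k * |bR j k| * mRR k) + (∑ k, φ k * |bR j k| * mRI k)
       + (∑ k, ξ k * |bI j k| * mIR k) + (∑ k, φ k * |bI j k| * mII k)) * Qd := by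
  obtain ⟨hzR1, hzI1, hzReq, _⟩ := hz
  obtain ⟨hwR1, hwI1, hwReq, _⟩ := hw
  have hder : deriv (fun s => zR j s - wR j s) t = deriv (zR j) t - deriv (wR j) t :=
    deriv_fun_sub ((hzR1 j).differentiable one_ne_zero).differentiableAt
      ((hwR1 j).differentiable one_ne_zero).differentiableAt
  rw [hder, hzReq j t ht, hwReq j t ht]
  choose α β γ ε hα0 hαl hβ0 hβl hγ0 hγl hε0 hεl heq1 heq2 using
    fun k => H1_decomp (fR k) (fI k) _ _ _ _ (hf k) (zR k t) (zI k t) (wR k t) (wI k t)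
  choose p q r s hpm hqm hrm hsm hgeq1 hgeq2 using
    fun k => H2_decomp (gR k) (gI k) _ _ _ _ (hg k)
      (zR k (t - τ j k)) (zI k (t - τ j k)) (wR k (t - τ j k)) (wI k (t - τ j k))
  -- T1
  have hT1 : σ * (-(d j) * zR j t - -(d j) * wR j t) = -(d j) * (ξ j * Q) := by
    have e : σ * (-(d j) * zR j t - -(d j) * wR j t) = -(d j) * (σ * (zR j t - wR j t)) := by
      ring
    rw [e, hmax]
  -- instantaneous sum
  have hsum1 : σ * ((∑ k, (aR j k * fR k (zR k t) (zI k t) - aI j k * fI k (zR k t) (zI k t))) -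
      (∑ k, (aR j k * fR k (wR k t) (wI k t) - aI j k * fI k (wR k t) (wI k t)))) =
      ∑ k, (σ * (aR j k * (α k * (zR k t - wR k t))) + σ * (aR j k * (β k * (zI k t - wI k t)))
        + σ * ((-aI j k) * (γ k * (zR k t - wR k t)))
        + σ * ((-aI j k) * (ε k * (zI k t - wI k t)))) := by
    rw [← Finset.sum_sub_distrib, Finset.mul_sum]
    apply Finset.sum_congr rfl
    intro k _
    linear_combination σ * aR j k * (heq1 k) - σ * aI j k * (heq2 k)
  have hoff : ∀ k : Fin n,
      σ * (aR j k * (α k * (zR k t - wR k t))) + σ * (aR j k * (β k * (zI k t - wI k t)))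
        + σ * ((-aI j k) * (γ k * (zR k t - wR k t)))
        + σ * ((-aI j k) * (ε k * (zI k t - wI k t)))
      ≤ ξ k * |aR j k| * lRR k * Q + φ k * |aR j k| * lRI k * Q
        + ξ k * |aI j k| * lIR k * Q + φ k * |aI j k| * lII k * Q := by
    intro k
    have b1 : σ * (aR j k * (α k * (zR k t - wR k t))) ≤ ξ k * |aR j k| * lRR k * Q := by
      calc σ * (aR j k * (α k * (zR k t - wR k t))) ≤ |aR j k| * lRR k * (ξ k * Q) :=
            offdiag_bound _ _ _ _ _ _ (abs_le.2 ⟨by linarith [hα0 k, hαl k], hαl k⟩) (hinst k).1 hσ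
        _ = ξ k * |aR j k| * lRR k * Q := by ring
    have b2 : σ * (aR j k * (β k * (zI k t - wI k t))) ≤ φ k * |aR j k| * lRI k * Q := by
      calc σ * (aR j k * (β k * (zI k t - wI k t))) ≤ |aR j k| * lRI k * (φ k * Q) :=
            offdiag_bound _ _ _ _ _ _ (abs_le.2 ⟨by linarith [hβ0 k, hβl k], hβl k⟩) (hinst k).2 hσ
        _ = φ k * |aR j k| * lRI k * Q := by ring
    have b3 : σ * ((-aI j k) * (γ k * (zR k t - wR k t))) ≤ ξ k * |aI j k| * lIR k * Q := by
      calc σ * ((-aI j k) * (γ k * (zR k t - wR k t))) ≤ |(-aI j k)| * lIR k * (ξ k * Q) :=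
            offdiag_bound _ _ _ _ _ _ (abs_le.2 ⟨by linarith [hγ0 k, hγl k], hγl k⟩) (hinst k).1 hσ
        _ = ξ k * |aI j k| * lIR k * Q := by rw [abs_neg]; ring
    have b4 : σ * ((-aI j k) * (ε k * (zI k t - wI k t))) ≤ φ k * |aI j k| * lII k * Q := by
      calc σ * ((-aI j k) * (ε k * (zI k t - wI k t))) ≤ |(-aI j k)| * lII k * (φ k * Q) :=
            offdiag_bound _ _ _ _ _ _ (abs_le.2 ⟨by linarith [hε0 k, hεl k], hεl k⟩) (hinst k).2 hσ
        _ = φ k * |aI j k| * lII k * Q := by rw [abs_neg]; ring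
    linarith
  have hdiag : σ * (aR j j * (α j * (zR j t - wR j t))) + σ * (aR j j * (β j * (zI j t - wI j t)))
        + σ * ((-aI j j) * (γ j * (zR j t - wR j t)))
        + σ * ((-aI j j) * (ε j * (zI j t - wI j t)))
      ≤ ξ j * max (aR j j) 0 * lRR j * Q + φ j * |aR j j| * lRI j * Q
        + ξ j * max (-(aI j j)) 0 * lIR j * Q + φ j * |aI j j| * lII j * Q := by
    have hξQ : 0 ≤ ξ j * Q := mul_nonneg (hξ j).le hQ
    have d1 : σ * (aR j j * (α j * (zR j t - wR j t))) ≤ ξ j * max (aR j j) 0 * lRR j * Q := by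
      have e : σ * (aR j j * (α j * (zR j t - wR j t)))
          = aR j j * (α j * (σ * (zR j t - wR j t))) := by ring
      rw [e, hmax]
      calc aR j j * (α j * (ξ j * Q)) ≤ max (aR j j) 0 * lRR j * (ξ j * Q) :=
            diag_bound _ _ _ _ (hα0 j) (hαl j) hξQ
        _ = ξ j * max (aR j j) 0 * lRR j * Q := by ring
    have d2 : σ * (aR j j * (β j * (zI j t - wI j t))) ≤ φ j * |aR j j| * lRI j * Q := by
      calc σ * (aR j j * (β j * (zI j t - wI j t))) ≤ |aR j j| * lRI j * (φ j * Q) :=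
            offdiag_bound _ _ _ _ _ _ (abs_le.2 ⟨by linarith [hβ0 j, hβl j], hβl j⟩) (hinst j).2 hσ
        _ = φ j * |aR j j| * lRI j * Q := by ring
    have d3 : σ * ((-aI j j) * (γ j * (zR j t - wR j t))) ≤ ξ j * max (-(aI j j)) 0 * lIR j * Q := by
      have e : σ * ((-aI j j) * (γ j * (zR j t - wR j t)))
          = (-aI j j) * (γ j * (σ * (zR j t - wR j t))) := by ring
      rw [e, hmax]
      calc (-aI j j) * (γ j * (ξ j * Q)) ≤ max (-aI j j) 0 * lIR j * (ξ j * Q) :=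
            diag_bound _ _ _ _ (hγ0 j) (hγl j) hξQ
        _ = ξ j * max (-(aI j j)) 0 * lIR j * Q := by ring
    have d4 : σ * ((-aI j j) * (ε j * (zI j t - wI j t))) ≤ φ j * |aI j j| * lII j * Q := by
      calc σ * ((-aI j j) * (ε j * (zI j t - wI j t))) ≤ |(-aI j j)| * lII j * (φ j * Q) :=
            offdiag_bound _ _ _ _ _ _ (abs_le.2 ⟨by linarith [hε0 j, hεl j], hεl j⟩) (hinst j).2 hσ
        _ = φ j * |aI j j| * lII j * Q := by rw [abs_neg]; ring
    linarith
  -- bound for instantaneous sum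
  have hsum1b : σ * ((∑ k, (aR j k * fR k (zR k t) (zI k t) - aI j k * fI k (zR k t) (zI k t))) -
      (∑ k, (aR j k * fR k (wR k t) (wI k t) - aI j k * fI k (wR k t) (wI k t)))) ≤
      (∑ k ∈ Finset.univ.erase j, ξ k * |aR j k| * lRR k) * Q
      + (∑ k, φ k * |aR j k| * lRI k) * Q
      + (∑ k ∈ Finset.univ.erase j, ξ k * |aI j k| * lIR k) * Q
      + (∑ k, φ k * |aI j k| * lII k) * Q
      + ξ j * max (aR j j) 0 * lRR j * Q + ξ j * max (-(aI j j)) 0 * lIR j * Q := by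
    rw [hsum1]
    rw [← Finset.sum_erase_add Finset.univ _ (Finset.mem_univ j)]
    have hstep : (∑ k ∈ Finset.univ.erase j,
        (σ * (aR j k * (α k * (zR k t - wR k t))) + σ * (aR j k * (β k * (zI k t - wI k t)))
        + σ * ((-aI j k) * (γ k * (zR k t - wR k t)))
        + σ * ((-aI j k) * (ε k * (zI k t - wI k t)))))
        ≤ ∑ k ∈ Finset.univ.erase j,
          (ξ k * |aR j k| * lRR k * Q + φ k * |aR j k| * lRI k * Q
           + ξ k * |aI j k| * lIR k * Q + φ k * |aI j k| * lII k * Q) :=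
      Finset.sum_le_sum (fun k _ => hoff k)
    have hsplit : ∑ k ∈ Finset.univ.erase j,
          (ξ k * |aR j k| * lRR k * Q + φ k * |aR j k| * lRI k * Q
           + ξ k * |aI j k| * lIR k * Q + φ k * |aI j k| * lII k * Q)
        = (∑ k ∈ Finset.univ.erase j, ξ k * |aR j k| * lRR k) * Q
          + (∑ k ∈ Finset.univ.erase j, φ k * |aR j k| * lRI k) * Q
          + (∑ k ∈ Finset.univ.erase j, ξ k * |aI j k| * lIR k) * Q
          + (∑ k ∈ Finset.univ.erase j, φ k * |aI j k| * lII k) * Q := by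
      rw [Finset.sum_add_distrib, Finset.sum_add_distrib, Finset.sum_add_distrib,
        Finset.sum_mul, Finset.sum_mul, Finset.sum_mul, Finset.sum_mul]
    have e2 : (∑ k ∈ Finset.univ.erase j, φ k * |aR j k| * lRI k) + φ j * |aR j j| * lRI j
        = ∑ k, φ k * |aR j k| * lRI k := Finset.sum_erase_add _ _ (Finset.mem_univ j)
    have e4 : (∑ k ∈ Finset.univ.erase j, φ k * |aI j k| * lII k) + φ j * |aI j j| * lII j
        = ∑ k, φ k * |aI j k| * lII k := Finset.sum_erase_add _ _ (Finset.mem_univ j)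
    have e2Q : (∑ k ∈ Finset.univ.erase j, φ k * |aR j k| * lRI k) * Q
        + φ j * |aR j j| * lRI j * Q = (∑ k, φ k * |aR j k| * lRI k) * Q := by
      linear_combination Q * e2
    have e4Q : (∑ k ∈ Finset.univ.erase j, φ k * |aI j k| * lII k) * Q
        + φ j * |aI j j| * lII j * Q = (∑ k, φ k * |aI j k| * lII k) * Q := by
      linear_combination Q * e4
    linarith [hstep, hsplit, hdiag, e2Q, e4Q]
  -- delayed sum
  have hsum2 : σ * ((∑ k, (bR j k * gR k (zR k (t - τ j k)) (zI k (t - τ j k))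
        - bI j k * gI k (zR k (t - τ j k)) (zI k (t - τ j k)))) -
      (∑ k, (bR j k * gR k (wR k (t - τ j k)) (wI k (t - τ j k))
        - bI j k * gI k (wR k (t - τ j k)) (wI k (t - τ j k))))) =
      ∑ k, (σ * (bR j k * (p k * (zR k (t - τ j k) - wR k (t - τ j k))))
        + σ * (bR j k * (q k * (zI k (t - τ j k) - wI k (t - τ j k))))
        + σ * ((-bI j k) * (r k * (zR k (t - τ j k) - wR k (t - τ j k))))
        + σ * ((-bI j k) * (s k * (zI k (t - τ j k) - wI k (t - τ j k))))) := by
    rw [← Finset.sum_sub_distrib, Finset.mul_sum]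
    apply Finset.sum_congr rfl
    intro k _
    linear_combination σ * bR j k * (hgeq1 k) - σ * bI j k * (hgeq2 k)
  have hoff2 : ∀ k : Fin n,
      σ * (bR j k * (p k * (zR k (t - τ j k) - wR k (t - τ j k))))
        + σ * (bR j k * (q k * (zI k (t - τ j k) - wI k (t - τ j k))))
        + σ * ((-bI j k) * (r k * (zR k (t - τ j k) - wR k (t - τ j k))))
        + σ * ((-bI j k) * (s k * (zI k (t - τ j k) - wI k (t - τ j k))))
      ≤ ξ k * |bR j k| * mRR k * Qd + φ k * |bR j k| * mRI k * Qd
        + ξ k * |bI j k| * mIR k * Qd + φ k * |bI j k| * mII k * Qd := by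
    intro k
    have hd := hdel k (t - τ j k) (by linarith [hτb j k]) (by linarith [hτ0 j k])
    have b1 : σ * (bR j k * (p k * (zR k (t - τ j k) - wR k (t - τ j k))))
        ≤ ξ k * |bR j k| * mRR k * Qd := by
      calc σ * (bR j k * (p k * (zR k (t - τ j k) - wR k (t - τ j k))))
          ≤ |bR j k| * mRR k * (ξ k * Qd) := offdiag_bound _ _ _ _ _ _ (hpm k) hd.1 hσ
        _ = ξ k * |bR j k| * mRR k * Qd := by ring
    have b2 : σ * (bR j k * (q k * (zI k (t - τ j k) - wI k (t - τ j k))))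
        ≤ φ k * |bR j k| * mRI k * Qd := by
      calc σ * (bR j k * (q k * (zI k (t - τ j k) - wI k (t - τ j k))))
          ≤ |bR j k| * mRI k * (φ k * Qd) := offdiag_bound _ _ _ _ _ _ (hqm k) hd.2 hσ
        _ = φ k * |bR j k| * mRI k * Qd := by ring
    have b3 : σ * ((-bI j k) * (r k * (zR k (t - τ j k) - wR k (t - τ j k))))
        ≤ ξ k * |bI j k| * mIR k * Qd := by
      calc σ * ((-bI j k) * (r k * (zR k (t - τ j k) - wR k (t - τ j k))))
          ≤ |(-bI j k)| * mIR k * (ξ k * Qd) := offdiag_bound _ _ _ _ _ _ (hrm k) hd.1 hσ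
        _ = ξ k * |bI j k| * mIR k * Qd := by rw [abs_neg]; ring
    have b4 : σ * ((-bI j k) * (s k * (zI k (t - τ j k) - wI k (t - τ j k))))
        ≤ φ k * |bI j k| * mII k * Qd := by
      calc σ * ((-bI j k) * (s k * (zI k (t - τ j k) - wI k (t - τ j k))))
          ≤ |(-bI j k)| * mII k * (φ k * Qd) := offdiag_bound _ _ _ _ _ _ (hsm k) hd.2 hσ
        _ = φ k * |bI j k| * mII k * Qd := by rw [abs_neg]; ring
    linarith
  have hsum2b : σ * ((∑ k, (bR j k * gR k (zR k (t - τ j k)) (zI k (t - τ j k))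
        - bI j k * gI k (zR k (t - τ j k)) (zI k (t - τ j k)))) -
      (∑ k, (bR j k * gR k (wR k (t - τ j k)) (wI k (t - τ j k))
        - bI j k * gI k (wR k (t - τ j k)) (wI k (t - τ j k))))) ≤
      (∑ k, ξ k * |bR j k| * mRR k) * Qd + (∑ k, φ k * |bR j k| * mRI k) * Qd
      + (∑ k, ξ k * |bI j k| * mIR k) * Qd + (∑ k, φ k * |bI j k| * mII k) * Qd := by
    rw [hsum2]
    calc (∑ k, (σ * (bR j k * (p k * (zR k (t - τ j k) - wR k (t - τ j k))))
        + σ * (bR j k * (q k * (zI k (t - τ j k) - wI k (t - τ j k))))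
        + σ * ((-bI j k) * (r k * (zR k (t - τ j k) - wR k (t - τ j k))))
        + σ * ((-bI j k) * (s k * (zI k (t - τ j k) - wI k (t - τ j k))))))
        ≤ ∑ k, (ξ k * |bR j k| * mRR k * Qd + φ k * |bR j k| * mRI k * Qd
          + ξ k * |bI j k| * mIR k * Qd + φ k * |bI j k| * mII k * Qd) :=
          Finset.sum_le_sum (fun k _ => hoff2 k)
      _ = (∑ k, ξ k * |bR j k| * mRR k) * Qd + (∑ k, φ k * |bR j k| * mRI k) * Qd
          + (∑ k, ξ k * |bI j k| * mIR k) * Qd + (∑ k, φ k * |bI j k| * mII k) * Qd := by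
          rw [Finset.sum_add_distrib, Finset.sum_add_distrib, Finset.sum_add_distrib,
            Finset.sum_mul, Finset.sum_mul, Finset.sum_mul, Finset.sum_mul]
  linarith [hT1, hsum1b, hsum2b]

set_option maxHeartbeats 1000000 in
lemma est_I (n : ℕ) (d : Fin n → ℝ) (aR aI bR bI τ : Fin n → Fin n → ℝ)
    (uR uI : Fin n → ℝ) (fR fI gR gI : Fin n → ℝ → ℝ → ℝ)
    (lRR lRI lIR lII mRR mRI mIR mII : Fin n → ℝ)
    (hf : ∀ j, CondH1 (fR j) (fI j) (lRR j) (lRI j) (lIR j) (lII j))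
    (hg : ∀ j, CondH2 (gR j) (gI j) (mRR j) (mRI j) (mIR j) (mII j))
    (ξ φ : Fin n → ℝ) (hξ : ∀ k, 0 < ξ k) (hφ : ∀ k, 0 < φ k)
    (zR zI wR wI : Fin n → ℝ → ℝ)
    (hz : IsSolution n d aR aI bR bI τ uR uI fR fI gR gI zR zI)
    (hw : IsSolution n d aR aI bR bI τ uR uI fR fI gR gI wR wI)
    (τb : ℝ) (hτ0 : ∀ j k, 0 ≤ τ j k) (hτb : ∀ j k, τ j k ≤ τb)
    (j : Fin n) (t : ℝ) (ht : 0 ≤ t) (σ Q Qd : ℝ) (hσ : |σ| = 1) (hQ : 0 ≤ Q)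
    (hinst : ∀ k, |zR k t - wR k t| ≤ ξ k * Q ∧ |zI k t - wI k t| ≤ φ k * Q)
    (hdel : ∀ k s, t - τb ≤ s → s ≤ t → |zR k s - wR k s| ≤ ξ k * Qd ∧ |zI k s - wI k s| ≤ φ k * Qd)
    (hmax : σ * (zI j t - wI j t) = φ j * Q) :
    σ * deriv (fun s => zI j s - wI j s) t ≤
      (φ j * (-(d j) + max (aR j j) 0 * lII j + max (aI j j) 0 * lRI j)
       + (∑ k, ξ k * |aR j k| * lIR k)
       + (∑ k ∈ Finset.univ.erase j, φ k * |aR j k| * lII k)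
       + (∑ k, ξ k * |aI j k| * lRR k)
       + (∑ k ∈ Finset.univ.erase j, φ k * |aI j k| * lRI k)) * Q
      + ((∑ k, ξ k * |bR j k| * mIR k) + (∑ k, φ k * |bR j k| * mII k)
       + (∑ k, ξ k * |bI j k| * mRR k) + (∑ k, φ k * |bI j k| * mRI k)) * Qd := by
  obtain ⟨hzR1, hzI1, _, hzIeq⟩ := hz
  obtain ⟨hwR1, hwI1, _, hwIeq⟩ := hw
  have hder : deriv (fun s => zI j s - wI j s) t = deriv (zI j) t - deriv (wI j) t :=
    deriv_fun_sub ((hzI1 j).differentiable one_ne_zero).differentiableAt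
      ((hwI1 j).differentiable one_ne_zero).differentiableAt
  rw [hder, hzIeq j t ht, hwIeq j t ht]
  choose α β γ ε hα0 hαl hβ0 hβl hγ0 hγl hε0 hεl heq1 heq2 using
    fun k => H1_decomp (fR k) (fI k) _ _ _ _ (hf k) (zR k t) (zI k t) (wR k t) (wI k t)
  choose p q r s hpm hqm hrm hsm hgeq1 hgeq2 using
    fun k => H2_decomp (gR k) (gI k) _ _ _ _ (hg k)
      (zR k (t - τ j k)) (zI k (t - τ j k)) (wR k (t - τ j k)) (wI k (t - τ j k))
  have hT1 : σ * (-(d j) * zI j t - -(d j) * wI j t) = -(d j) * (φ j * Q) := by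
    have e : σ * (-(d j) * zI j t - -(d j) * wI j t) = -(d j) * (σ * (zI j t - wI j t)) := by
      ring
    rw [e, hmax]
  have hsum1 : σ * ((∑ k, (aR j k * fI k (zR k t) (zI k t) + aI j k * fR k (zR k t) (zI k t))) -
      (∑ k, (aR j k * fI k (wR k t) (wI k t) + aI j k * fR k (wR k t) (wI k t)))) =
      ∑ k, (σ * (aR j k * (γ k * (zR k t - wR k t))) + σ * (aR j k * (ε k * (zI k t - wI k t)))
        + σ * (aI j k * (α k * (zR k t - wR k t)))
        + σ * (aI j k * (β k * (zI k t - wI k t)))) := by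
    rw [← Finset.sum_sub_distrib, Finset.mul_sum]
    apply Finset.sum_congr rfl
    intro k _
    linear_combination σ * aR j k * (heq2 k) + σ * aI j k * (heq1 k)
  have hoff : ∀ k : Fin n,
      σ * (aR j k * (γ k * (zR k t - wR k t))) + σ * (aR j k * (ε k * (zI k t - wI k t)))
        + σ * (aI j k * (α k * (zR k t - wR k t)))
        + σ * (aI j k * (β k * (zI k t - wI k t)))
      ≤ ξ k * |aR j k| * lIR k * Q + φ k * |aR j k| * lII k * Q
        + ξ k * |aI j k| * lRR k * Q + φ k * |aI j k| * lRI k * Q := by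
    intro k
    have b1 : σ * (aR j k * (γ k * (zR k t - wR k t))) ≤ ξ k * |aR j k| * lIR k * Q := by
      calc σ * (aR j k * (γ k * (zR k t - wR k t))) ≤ |aR j k| * lIR k * (ξ k * Q) :=
            offdiag_bound _ _ _ _ _ _ (abs_le.2 ⟨by linarith [hγ0 k, hγl k], hγl k⟩) (hinst k).1 hσ
        _ = ξ k * |aR j k| * lIR k * Q := by ring
    have b2 : σ * (aR j k * (ε k * (zI k t - wI k t))) ≤ φ k * |aR j k| * lII k * Q := by
      calc σ * (aR j k * (ε k * (zI k t - wI k t))) ≤ |aR j k| * lII k * (φ k * Q) :=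
            offdiag_bound _ _ _ _ _ _ (abs_le.2 ⟨by linarith [hε0 k, hεl k], hεl k⟩) (hinst k).2 hσ
        _ = φ k * |aR j k| * lII k * Q := by ring
    have b3 : σ * (aI j k * (α k * (zR k t - wR k t))) ≤ ξ k * |aI j k| * lRR k * Q := by
      calc σ * (aI j k * (α k * (zR k t - wR k t))) ≤ |aI j k| * lRR k * (ξ k * Q) :=
            offdiag_bound _ _ _ _ _ _ (abs_le.2 ⟨by linarith [hα0 k, hαl k], hαl k⟩) (hinst k).1 hσ
        _ = ξ k * |aI j k| * lRR k * Q := by ring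
    have b4 : σ * (aI j k * (β k * (zI k t - wI k t))) ≤ φ k * |aI j k| * lRI k * Q := by
      calc σ * (aI j k * (β k * (zI k t - wI k t))) ≤ |aI j k| * lRI k * (φ k * Q) :=
            offdiag_bound _ _ _ _ _ _ (abs_le.2 ⟨by linarith [hβ0 k, hβl k], hβl k⟩) (hinst k).2 hσ
        _ = φ k * |aI j k| * lRI k * Q := by ring
    linarith
  have hdiag : σ * (aR j j * (γ j * (zR j t - wR j t))) + σ * (aR j j * (ε j * (zI j t - wI j t)))
        + σ * (aI j j * (α j * (zR j t - wR j t)))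
        + σ * (aI j j * (β j * (zI j t - wI j t)))
      ≤ ξ j * |aR j j| * lIR j * Q + φ j * max (aR j j) 0 * lII j * Q
        + ξ j * |aI j j| * lRR j * Q + φ j * max (aI j j) 0 * lRI j * Q := by
    have hφQ : 0 ≤ φ j * Q := mul_nonneg (hφ j).le hQ
    have d1 : σ * (aR j j * (γ j * (zR j t - wR j t))) ≤ ξ j * |aR j j| * lIR j * Q := by
      calc σ * (aR j j * (γ j * (zR j t - wR j t))) ≤ |aR j j| * lIR j * (ξ j * Q) :=
            offdiag_bound _ _ _ _ _ _ (abs_le.2 ⟨by linarith [hγ0 j, hγl j], hγl j⟩) (hinst j).1 hσ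
        _ = ξ j * |aR j j| * lIR j * Q := by ring
    have d2 : σ * (aR j j * (ε j * (zI j t - wI j t))) ≤ φ j * max (aR j j) 0 * lII j * Q := by
      have e : σ * (aR j j * (ε j * (zI j t - wI j t)))
          = aR j j * (ε j * (σ * (zI j t - wI j t))) := by ring
      rw [e, hmax]
      calc aR j j * (ε j * (φ j * Q)) ≤ max (aR j j) 0 * lII j * (φ j * Q) :=
            diag_bound _ _ _ _ (hε0 j) (hεl j) hφQ
        _ = φ j * max (aR j j) 0 * lII j * Q := by ring
    have d3 : σ * (aI j j * (α j * (zR j t - wR j t))) ≤ ξ j * |aI j j| * lRR j * Q := by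
      calc σ * (aI j j * (α j * (zR j t - wR j t))) ≤ |aI j j| * lRR j * (ξ j * Q) :=
            offdiag_bound _ _ _ _ _ _ (abs_le.2 ⟨by linarith [hα0 j, hαl j], hαl j⟩) (hinst j).1 hσ
        _ = ξ j * |aI j j| * lRR j * Q := by ring
    have d4 : σ * (aI j j * (β j * (zI j t - wI j t))) ≤ φ j * max (aI j j) 0 * lRI j * Q := by
      have e : σ * (aI j j * (β j * (zI j t - wI j t)))
          = aI j j * (β j * (σ * (zI j t - wI j t))) := by ring
      rw [e, hmax]
      calc aI j j * (β j * (φ j * Q)) ≤ max (aI j j) 0 * lRI j * (φ j * Q) :=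
            diag_bound _ _ _ _ (hβ0 j) (hβl j) hφQ
        _ = φ j * max (aI j j) 0 * lRI j * Q := by ring
    linarith
  have hsum1b : σ * ((∑ k, (aR j k * fI k (zR k t) (zI k t) + aI j k * fR k (zR k t) (zI k t))) -
      (∑ k, (aR j k * fI k (wR k t) (wI k t) + aI j k * fR k (wR k t) (wI k t)))) ≤
      (∑ k, ξ k * |aR j k| * lIR k) * Q
      + (∑ k ∈ Finset.univ.erase j, φ k * |aR j k| * lII k) * Q
      + (∑ k, ξ k * |aI j k| * lRR k) * Q
      + (∑ k ∈ Finset.univ.erase j, φ k * |aI j k| * lRI k) * Q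
      + φ j * max (aR j j) 0 * lII j * Q + φ j * max (aI j j) 0 * lRI j * Q := by
    rw [hsum1]
    rw [← Finset.sum_erase_add Finset.univ _ (Finset.mem_univ j)]
    have hstep : (∑ k ∈ Finset.univ.erase j,
        (σ * (aR j k * (γ k * (zR k t - wR k t))) + σ * (aR j k * (ε k * (zI k t - wI k t)))
        + σ * (aI j k * (α k * (zR k t - wR k t)))
        + σ * (aI j k * (β k * (zI k t - wI k t)))))
        ≤ ∑ k ∈ Finset.univ.erase j,
          (ξ k * |aR j k| * lIR k * Q + φ k * |aR j k| * lII k * Q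
           + ξ k * |aI j k| * lRR k * Q + φ k * |aI j k| * lRI k * Q) :=
      Finset.sum_le_sum (fun k _ => hoff k)
    have hsplit : ∑ k ∈ Finset.univ.erase j,
          (ξ k * |aR j k| * lIR k * Q + φ k * |aR j k| * lII k * Q
           + ξ k * |aI j k| * lRR k * Q + φ k * |aI j k| * lRI k * Q)
        = (∑ k ∈ Finset.univ.erase j, ξ k * |aR j k| * lIR k) * Q
          + (∑ k ∈ Finset.univ.erase j, φ k * |aR j k| * lII k) * Q
          + (∑ k ∈ Finset.univ.erase j, ξ k * |aI j k| * lRR k) * Q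
          + (∑ k ∈ Finset.univ.erase j, φ k * |aI j k| * lRI k) * Q := by
      rw [Finset.sum_add_distrib, Finset.sum_add_distrib, Finset.sum_add_distrib,
        Finset.sum_mul, Finset.sum_mul, Finset.sum_mul, Finset.sum_mul]
    have e1 : (∑ k ∈ Finset.univ.erase j, ξ k * |aR j k| * lIR k) + ξ j * |aR j j| * lIR j
        = ∑ k, ξ k * |aR j k| * lIR k := Finset.sum_erase_add _ _ (Finset.mem_univ j)
    have e3 : (∑ k ∈ Finset.univ.erase j, ξ k * |aI j k| * lRR k) + ξ j * |aI j j| * lRR j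
        = ∑ k, ξ k * |aI j k| * lRR k := Finset.sum_erase_add _ _ (Finset.mem_univ j)
    have e1Q : (∑ k ∈ Finset.univ.erase j, ξ k * |aR j k| * lIR k) * Q
        + ξ j * |aR j j| * lIR j * Q = (∑ k, ξ k * |aR j k| * lIR k) * Q := by
      linear_combination Q * e1
    have e3Q : (∑ k ∈ Finset.univ.erase j, ξ k * |aI j k| * lRR k) * Q
        + ξ j * |aI j j| * lRR j * Q = (∑ k, ξ k * |aI j k| * lRR k) * Q := by
      linear_combination Q * e3
    linarith [hstep, hsplit, hdiag, e1Q, e3Q]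
  have hsum2 : σ * ((∑ k, (bR j k * gI k (zR k (t - τ j k)) (zI k (t - τ j k))
        + bI j k * gR k (zR k (t - τ j k)) (zI k (t - τ j k)))) -
      (∑ k, (bR j k * gI k (wR k (t - τ j k)) (wI k (t - τ j k))
        + bI j k * gR k (wR k (t - τ j k)) (wI k (t - τ j k))))) =
      ∑ k, (σ * (bR j k * (r k * (zR k (t - τ j k) - wR k (t - τ j k))))
        + σ * (bR j k * (s k * (zI k (t - τ j k) - wI k (t - τ j k))))
        + σ * (bI j k * (p k * (zR k (t - τ j k) - wR k (t - τ j k))))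
        + σ * (bI j k * (q k * (zI k (t - τ j k) - wI k (t - τ j k))))) := by
    rw [← Finset.sum_sub_distrib, Finset.mul_sum]
    apply Finset.sum_congr rfl
    intro k _
    linear_combination σ * bR j k * (hgeq2 k) + σ * bI j k * (hgeq1 k)
  have hoff2 : ∀ k : Fin n,
      σ * (bR j k * (r k * (zR k (t - τ j k) - wR k (t - τ j k))))
        + σ * (bR j k * (s k * (zI k (t - τ j k) - wI k (t - τ j k))))
        + σ * (bI j k * (p k * (zR k (t - τ j k) - wR k (t - τ j k))))
        + σ * (bI j k * (q k * (zI k (t - τ j k) - wI k (t - τ j k))))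
      ≤ ξ k * |bR j k| * mIR k * Qd + φ k * |bR j k| * mII k * Qd
        + ξ k * |bI j k| * mRR k * Qd + φ k * |bI j k| * mRI k * Qd := by
    intro k
    have hd := hdel k (t - τ j k) (by linarith [hτb j k]) (by linarith [hτ0 j k])
    have b1 : σ * (bR j k * (r k * (zR k (t - τ j k) - wR k (t - τ j k))))
        ≤ ξ k * |bR j k| * mIR k * Qd := by
      calc σ * (bR j k * (r k * (zR k (t - τ j k) - wR k (t - τ j k))))
          ≤ |bR j k| * mIR k * (ξ k * Qd) := offdiag_bound _ _ _ _ _ _ (hrm k) hd.1 hσ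
        _ = ξ k * |bR j k| * mIR k * Qd := by ring
    have b2 : σ * (bR j k * (s k * (zI k (t - τ j k) - wI k (t - τ j k))))
        ≤ φ k * |bR j k| * mII k * Qd := by
      calc σ * (bR j k * (s k * (zI k (t - τ j k) - wI k (t - τ j k))))
          ≤ |bR j k| * mII k * (φ k * Qd) := offdiag_bound _ _ _ _ _ _ (hsm k) hd.2 hσ
        _ = φ k * |bR j k| * mII k * Qd := by ring
    have b3 : σ * (bI j k * (p k * (zR k (t - τ j k) - wR k (t - τ j k))))
        ≤ ξ k * |bI j k| * mRR k * Qd := by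
      calc σ * (bI j k * (p k * (zR k (t - τ j k) - wR k (t - τ j k))))
          ≤ |bI j k| * mRR k * (ξ k * Qd) := offdiag_bound _ _ _ _ _ _ (hpm k) hd.1 hσ
        _ = ξ k * |bI j k| * mRR k * Qd := by ring
    have b4 : σ * (bI j k * (q k * (zI k (t - τ j k) - wI k (t - τ j k))))
        ≤ φ k * |bI j k| * mRI k * Qd := by
      calc σ * (bI j k * (q k * (zI k (t - τ j k) - wI k (t - τ j k))))
          ≤ |bI j k| * mRI k * (φ k * Qd) := offdiag_bound _ _ _ _ _ _ (hqm k) hd.2 hσ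
        _ = φ k * |bI j k| * mRI k * Qd := by ring
    linarith
  have hsum2b : σ * ((∑ k, (bR j k * gI k (zR k (t - τ j k)) (zI k (t - τ j k))
        + bI j k * gR k (zR k (t - τ j k)) (zI k (t - τ j k)))) -
      (∑ k, (bR j k * gI k (wR k (t - τ j k)) (wI k (t - τ j k))
        + bI j k * gR k (wR k (t - τ j k)) (wI k (t - τ j k))))) ≤
      (∑ k, ξ k * |bR j k| * mIR k) * Qd + (∑ k, φ k * |bR j k| * mII k) * Qd
      + (∑ k, ξ k * |bI j k| * mRR k) * Qd + (∑ k, φ k * |bI j k| * mRI k) * Qd := by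
    rw [hsum2]
    calc (∑ k, (σ * (bR j k * (r k * (zR k (t - τ j k) - wR k (t - τ j k))))
        + σ * (bR j k * (s k * (zI k (t - τ j k) - wI k (t - τ j k))))
        + σ * (bI j k * (p k * (zR k (t - τ j k) - wR k (t - τ j k))))
        + σ * (bI j k * (q k * (zI k (t - τ j k) - wI k (t - τ j k))))))
        ≤ ∑ k, (ξ k * |bR j k| * mIR k * Qd + φ k * |bR j k| * mII k * Qd
          + ξ k * |bI j k| * mRR k * Qd + φ k * |bI j k| * mRI k * Qd) :=
          Finset.sum_le_sum (fun k _ => hoff2 k)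
      _ = (∑ k, ξ k * |bR j k| * mIR k) * Qd + (∑ k, φ k * |bR j k| * mII k) * Qd
          + (∑ k, ξ k * |bI j k| * mRR k) * Qd + (∑ k, φ k * |bI j k| * mRI k) * Qd := by
          rw [Finset.sum_add_distrib, Finset.sum_add_distrib, Finset.sum_add_distrib,
            Finset.sum_mul, Finset.sum_mul, Finset.sum_mul, Finset.sum_mul]
  linarith [hT1, hsum1b, hsum2b]

lemma exp_decay_tendsto (δ : ℝ) (hδ : 0 < δ) (K : ℝ) :
    Filter.Tendsto (fun t : ℝ => K * Real.exp (-δ * t)) Filter.atTop (nhds 0) := by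
  have h1 : Filter.Tendsto (fun t : ℝ => -δ * t) Filter.atTop Filter.atBot :=
    Filter.Tendsto.const_mul_atTop_of_neg (neg_lt_zero.2 hδ) Filter.tendsto_id
  have h2 := Real.tendsto_exp_atBot.comp h1
  simpa using h2.const_mul K

lemma geom_partial_bound (x : ℝ) (h0 : 0 ≤ x) (h1 : x < 1) (m : ℕ) :
    ∑ i ∈ Finset.range m, x ^ i ≤ 1 / (1 - x) := by
  have hx : (0:ℝ) ≤ x ^ m := pow_nonneg h0 m
  have h2 : ∑ i ∈ Finset.range m, x ^ i = (1 - x ^ m) / (1 - x) := by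
    rw [geom_sum_eq (by intro h; rw [h] at h1; linarith) m,
      div_eq_div_iff (by intro h; rw [sub_eq_zero] at h; rw [← h] at h1; linarith
        : x - 1 ≠ 0) (by intro h; rw [sub_eq_zero] at h; rw [h] at h1; linarith
        : (1:ℝ) - x ≠ 0)]
    ring
  rw [h2, div_le_div_iff_of_pos_right (by linarith)]
  linarith

lemma tendsto_deriv_zero (f : ℝ → ℝ) (hf : ContDiff ℝ 1 f) (L c : ℝ)
    (hL : Filter.Tendsto f Filter.atTop (nhds L))
    (hc : Filter.Tendsto (deriv f) Filter.atTop (nhds c)) : c = 0 := by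
  by_contra hc0
  have hcpos : 0 < |c| / 2 := by
    have : 0 < |c| := abs_pos.2 hc0
    linarith
  have h1 : ∀ᶠ t : ℝ in Filter.atTop, |deriv f t - c| < |c| / 2 := by
    have := Metric.tendsto_nhds.1 hc (|c| / 2) hcpos
    simpa [Real.dist_eq] using this
  have hnat : Filter.Tendsto (fun m : ℕ => (m : ℝ)) Filter.atTop Filter.atTop :=
    tendsto_natCast_atTop_atTop
  have hnat1 : Filter.Tendsto (fun m : ℕ => (m : ℝ) + 1) Filter.atTop Filter.atTop :=
    Filter.tendsto_atTop_add_const_right _ 1 hnat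
  have h2 : Filter.Tendsto (fun m : ℕ => f ((m : ℝ) + 1) - f (m : ℝ))
      Filter.atTop (nhds 0) := by
    have := (hL.comp hnat1).sub (hL.comp hnat)
    simpa using this
  have h3 : ∀ᶠ m : ℕ in Filter.atTop, |f ((m : ℝ) + 1) - f (m : ℝ)| < |c| / 2 := by
    have := Metric.tendsto_nhds.1 h2 (|c| / 2) hcpos
    simpa [Real.dist_eq] using this
  obtain ⟨T, hT⟩ := Filter.eventually_atTop.1 h1
  obtain ⟨N, hN⟩ := Filter.eventually_atTop.1 h3
  obtain ⟨m0, hm0⟩ := exists_nat_ge T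
  set m := max m0 N with hm
  have hmT : T ≤ (m : ℝ) := le_trans hm0 (by exact_mod_cast Nat.cast_le.2 (le_max_left _ _))
  have hmN : N ≤ m := le_max_right _ _
  obtain ⟨ζ, hζmem, hζ⟩ := exists_deriv_eq_slope f
    (by linarith : (m : ℝ) < (m : ℝ) + 1)
    (hf.continuous.continuousOn) ((hf.differentiable one_ne_zero).differentiableOn)
  have hζT : T ≤ ζ := le_trans hmT hζmem.1.le
  have e1 := hT ζ hζT
  have e2 := hN m hmN
  have e3 : deriv f ζ = f ((m : ℝ) + 1) - f (m : ℝ) := by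
    rw [hζ]; ring_nf
  have e4 : |c| - |deriv f ζ| ≤ |c - deriv f ζ| := abs_sub_abs_le_abs_sub _ _
  have e5 : |c - deriv f ζ| = |deriv f ζ - c| := abs_sub_comm _ _
  rw [e3] at e1
  rw [e5, e3] at e4
  linarith

set_option maxHeartbeats 1000000 in
lemma decay (n : ℕ) (hn : 1 ≤ n) (d : Fin n → ℝ)
    (aR aI bR bI τ : Fin n → Fin n → ℝ) (uR uI : Fin n → ℝ)
    (fR fI gR gI : Fin n → ℝ → ℝ → ℝ)
    (lRR lRI lIR lII mRR mRI mIR mII : Fin n → ℝ)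
    (hf : ∀ j, CondH1 (fR j) (fI j) (lRR j) (lRI j) (lIR j) (lII j))
    (hg : ∀ j, CondH2 (gR j) (gI j) (mRR j) (mRI j) (mIR j) (mII j))
    (ξ φ : Fin n → ℝ) (hξ : ∀ k, 0 < ξ k) (hφ : ∀ k, 0 < φ k)
    (τb : ℝ) (hτ0 : ∀ j k, 0 ≤ τ j k) (hτble : ∀ j k, τ j k ≤ τb) (hτb0 : 0 ≤ τb)
    (δ : ℝ) (hδ : 0 < δ)
    (hδ3 : ∀ j : Fin n,
      (ξ j * (-(d j) + max (aR j j) 0 * lRR j + max (-(aI j j)) 0 * lIR j)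
       + (∑ k ∈ Finset.univ.erase j, ξ k * |aR j k| * lRR k)
       + (∑ k, φ k * |aR j k| * lRI k)
       + (∑ k ∈ Finset.univ.erase j, ξ k * |aI j k| * lIR k)
       + (∑ k, φ k * |aI j k| * lII k))
      + Real.exp (δ * τb) *
        ((∑ k, ξ k * |bR j k| * mRR k) + (∑ k, φ k * |bR j k| * mRI k)
         + (∑ k, ξ k * |bI j k| * mIR k) + (∑ k, φ k * |bI j k| * mII k))
      + δ * ξ j < 0)
    (hδ4 : ∀ j : Fin n,
      (φ j * (-(d j) + max (aR j j) 0 * lII j + max (aI j j) 0 * lRI j)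
       + (∑ k, ξ k * |aR j k| * lIR k)
       + (∑ k ∈ Finset.univ.erase j, φ k * |aR j k| * lII k)
       + (∑ k, ξ k * |aI j k| * lRR k)
       + (∑ k ∈ Finset.univ.erase j, φ k * |aI j k| * lRI k))
      + Real.exp (δ * τb) *
        ((∑ k, ξ k * |bR j k| * mIR k) + (∑ k, φ k * |bR j k| * mII k)
         + (∑ k, ξ k * |bI j k| * mRR k) + (∑ k, φ k * |bI j k| * mRI k))
      + δ * φ j < 0)
    (zR zI wR wI : Fin n → ℝ → ℝ)
    (hz : IsSolution n d aR aI bR bI τ uR uI fR fI gR gI zR zI)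
    (hw : IsSolution n d aR aI bR bI τ uR uI fR fI gR gI wR wI)
    (M : ℝ)
    (hM : ∀ j s, -τb ≤ s → s ≤ 0 →
      |zR j s - wR j s| ≤ ξ j * M ∧ |zI j s - wI j s| ≤ φ j * M) :
    ∀ t, 0 ≤ t → ∀ j,
      |zR j t - wR j t| ≤ ξ j * (M * Real.exp (-δ * t)) ∧
      |zI j t - wI j t| ≤ φ j * (M * Real.exp (-δ * t)) := by
  haveI : Nonempty (Fin n) := ⟨⟨0, hn⟩⟩
  set E : Fin n × Bool → ℝ → ℝ :=
    fun p t => cond p.2 (zI p.1 t - wI p.1 t) (zR p.1 t - wR p.1 t) with hE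
  set W : Fin n × Bool → ℝ := fun p => cond p.2 (φ p.1) (ξ p.1) with hW
  set A : Fin n × Bool → ℝ := fun p => cond p.2
      (φ p.1 * (-(d p.1) + max (aR p.1 p.1) 0 * lII p.1 + max (aI p.1 p.1) 0 * lRI p.1)
       + (∑ k, ξ k * |aR p.1 k| * lIR k)
       + (∑ k ∈ Finset.univ.erase p.1, φ k * |aR p.1 k| * lII k)
       + (∑ k, ξ k * |aI p.1 k| * lRR k)
       + (∑ k ∈ Finset.univ.erase p.1, φ k * |aI p.1 k| * lRI k))
      (ξ p.1 * (-(d p.1) + max (aR p.1 p.1) 0 * lRR p.1 + max (-(aI p.1 p.1)) 0 * lIR p.1)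
       + (∑ k ∈ Finset.univ.erase p.1, ξ k * |aR p.1 k| * lRR k)
       + (∑ k, φ k * |aR p.1 k| * lRI k)
       + (∑ k ∈ Finset.univ.erase p.1, ξ k * |aI p.1 k| * lIR k)
       + (∑ k, φ k * |aI p.1 k| * lII k)) with hA
  set B : Fin n × Bool → ℝ := fun p => cond p.2
      ((∑ k, ξ k * |bR p.1 k| * mIR k) + (∑ k, φ k * |bR p.1 k| * mII k)
       + (∑ k, ξ k * |bI p.1 k| * mRR k) + (∑ k, φ k * |bI p.1 k| * mRI k))
      ((∑ k, ξ k * |bR p.1 k| * mRR k) + (∑ k, φ k * |bR p.1 k| * mRI k)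
       + (∑ k, ξ k * |bI p.1 k| * mIR k) + (∑ k, φ k * |bI p.1 k| * mII k)) with hB
  have hWpos : ∀ p, 0 < W p := by
    rintro ⟨j, c⟩
    cases c
    · exact hξ j
    · exact hφ j
  have hEdiff : ∀ p, Differentiable ℝ (E p) := by
    rintro ⟨j, c⟩
    cases c
    · exact ((hz.1 j).differentiable one_ne_zero).sub ((hw.1 j).differentiable one_ne_zero)
    · exact ((hz.2.1 j).differentiable one_ne_zero).sub ((hw.2.1 j).differentiable one_ne_zero)
  have hABδ : ∀ p, A p + Real.exp (δ * τb) * B p + δ * W p < 0 := by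
    rintro ⟨j, c⟩
    cases c
    · exact hδ3 j
    · exact hδ4 j
  have hM' : ∀ p, ∀ s, -τb ≤ s → s ≤ 0 → |E p s| ≤ W p * M := by
    rintro ⟨j, c⟩ s h1 h2
    cases c
    · exact (hM j s h1 h2).1
    · exact (hM j s h1 h2).2
  have hest : ∀ p t, 0 < t → ∀ σ Q Qd : ℝ, |σ| = 1 → 0 < Q → Q ≤ Qd →
      (∀ q, |E q t| ≤ W q * Q) →
      (∀ q s, t - τb ≤ s → s ≤ t → |E q s| ≤ W q * Qd) →
      σ * E p t = W p * Q →
      σ * deriv (E p) t ≤ A p * Q + B p * Qd := by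
    rintro ⟨j, c⟩ t ht σ Q Qd hσ hQ hQQd hinst hdel hmax
    have hinst' : ∀ k, |zR k t - wR k t| ≤ ξ k * Q ∧ |zI k t - wI k t| ≤ φ k * Q :=
      fun k => ⟨hinst (k, false), hinst (k, true)⟩
    have hdel' : ∀ k s, t - τb ≤ s → s ≤ t →
        |zR k s - wR k s| ≤ ξ k * Qd ∧ |zI k s - wI k s| ≤ φ k * Qd :=
      fun k s h1 h2 => ⟨hdel (k, false) s h1 h2, hdel (k, true) s h1 h2⟩
    cases c
    · exact est_R n d aR aI bR bI τ uR uI fR fI gR gI lRR lRI lIR lII mRR mRI mIR mII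
        hf hg ξ φ hξ hφ zR zI wR wI hz hw τb hτ0 hτble j t ht.le σ Q Qd hσ hQ.le
        hinst' hdel' hmax
    · exact est_I n d aR aI bR bI τ uR uI fR fI gR gI lRR lRI lIR lII mRR mRI mIR mII
        hf hg ξ φ hξ hφ zR zI wR wI hz hw τb hτ0 hτble j t ht.le σ Q Qd hσ hQ.le
        hinst' hdel' hmax
  have hmain := halanay W hWpos E hEdiff τb hτb0 A B δ hδ hABδ M hM' hest
  intro t ht j
  exact ⟨hmain t ht (j, false), hmain t ht (j, true)⟩

lemma shift_solution (n : ℕ) (d : Fin n → ℝ) (aR aI bR bI τ : Fin n → Fin n → ℝ)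
    (uR uI : Fin n → ℝ) (fR fI gR gI : Fin n → ℝ → ℝ → ℝ)
    (zR zI : Fin n → ℝ → ℝ)
    (hz : IsSolution n d aR aI bR bI τ uR uI fR fI gR gI zR zI)
    (c : ℝ) (hc : 0 ≤ c) :
    IsSolution n d aR aI bR bI τ uR uI fR fI gR gI
      (fun j t => zR j (t + c)) (fun j t => zI j (t + c)) := by
  obtain ⟨h1, h2, h3, h4⟩ := hz
  refine ⟨fun j => (h1 j).comp (contDiff_id.add contDiff_const),
    fun j => (h2 j).comp (contDiff_id.add contDiff_const), ?_, ?_⟩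
  · intro j t ht
    have e : deriv (fun t => zR j (t + c)) t = deriv (zR j) (t + c) :=
      deriv_comp_add_const (zR j) c t
    rw [e, h3 j (t + c) (by linarith)]
    simp only [sub_add_eq_add_sub]
  · intro j t ht
    have e : deriv (fun t => zI j (t + c)) t = deriv (zI j) (t + c) :=
      deriv_comp_add_const (zI j) c t
    rw [e, h4 j (t + c) (by linarith)]
    simp only [sub_add_eq_add_sub]

lemma const_solution (n : ℕ) (d : Fin n → ℝ) (aR aI bR bI τ : Fin n → Fin n → ℝ)
    (uR uI : Fin n → ℝ) (fR fI gR gI : Fin n → ℝ → ℝ → ℝ)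
    (zbR zbI : Fin n → ℝ)
    (heq : IsEquilibrium n d aR aI bR bI uR uI fR fI gR gI zbR zbI) :
    IsSolution n d aR aI bR bI τ uR uI fR fI gR gI
      (fun j _ => zbR j) (fun j _ => zbI j) := by
  refine ⟨fun j => contDiff_const, fun j => contDiff_const, ?_, ?_⟩
  · intro j t ht
    rw [deriv_const]
    exact (heq.1 j).symm
  · intro j t ht
    rw [deriv_const]
    exact (heq.2 j).symm

set_option maxHeartbeats 2000000 in
lemma exists_equilibrium (n : ℕ) (hn : 1 ≤ n) (d : Fin n → ℝ)
    (aR aI bR bI τ : Fin n → Fin n → ℝ) (uR uI : Fin n → ℝ)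
    (fR fI gR gI : Fin n → ℝ → ℝ → ℝ)
    (lRR lRI lIR lII mRR mRI mIR mII : Fin n → ℝ)
    (hf : ∀ j, CondH1 (fR j) (fI j) (lRR j) (lRI j) (lIR j) (lII j))
    (hg : ∀ j, CondH2 (gR j) (gI j) (mRR j) (mRI j) (mIR j) (mII j))
    (ξ φ : Fin n → ℝ) (hξ : ∀ k, 0 < ξ k) (hφ : ∀ k, 0 < φ k)
    (τb : ℝ) (hτ0 : ∀ j k, 0 ≤ τ j k) (hτble : ∀ j k, τ j k ≤ τb) (hτb0 : 0 ≤ τb)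
    (δ : ℝ) (hδ : 0 < δ)
    (hδ3 : ∀ j : Fin n,
      (ξ j * (-(d j) + max (aR j j) 0 * lRR j + max (-(aI j j)) 0 * lIR j)
       + (∑ k ∈ Finset.univ.erase j, ξ k * |aR j k| * lRR k)
       + (∑ k, φ k * |aR j k| * lRI k)
       + (∑ k ∈ Finset.univ.erase j, ξ k * |aI j k| * lIR k)
       + (∑ k, φ k * |aI j k| * lII k))
      + Real.exp (δ * τb) *
        ((∑ k, ξ k * |bR j k| * mRR k) + (∑ k, φ k * |bR j k| * mRI k)
         + (∑ k, ξ k * |bI j k| * mIR k) + (∑ k, φ k * |bI j k| * mII k))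
      + δ * ξ j < 0)
    (hδ4 : ∀ j : Fin n,
      (φ j * (-(d j) + max (aR j j) 0 * lII j + max (aI j j) 0 * lRI j)
       + (∑ k, ξ k * |aR j k| * lIR k)
       + (∑ k ∈ Finset.univ.erase j, φ k * |aR j k| * lII k)
       + (∑ k, ξ k * |aI j k| * lRR k)
       + (∑ k ∈ Finset.univ.erase j, φ k * |aI j k| * lRI k))
      + Real.exp (δ * τb) *
        ((∑ k, ξ k * |bR j k| * mIR k) + (∑ k, φ k * |bR j k| * mII k)
         + (∑ k, ξ k * |bI j k| * mRR k) + (∑ k, φ k * |bI j k| * mRI k))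
      + δ * φ j < 0)
    (zR zI : Fin n → ℝ → ℝ)
    (hz : IsSolution n d aR aI bR bI τ uR uI fR fI gR gI zR zI) :
    ∃ zbR zbI : Fin n → ℝ, IsEquilibrium n d aR aI bR bI uR uI fR fI gR gI zbR zbI := by
  haveI : Nonempty (Fin n) := ⟨⟨0, hn⟩⟩
  have hcontR : ∀ j, Continuous (zR j) := fun j => (hz.1 j).continuous
  have hcontI : ∀ j, Continuous (zI j) := fun j => (hz.2.1 j).continuous
  have hb1 : ∀ j : Fin n, ∃ Rj : ℝ, ∀ u ∈ Set.Icc (-τb) (1:ℝ), |zR j u| ≤ Rj := by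
    intro j
    obtain ⟨Rj, hRj⟩ := isCompact_Icc.exists_bound_of_continuousOn (hcontR j).continuousOn
    exact ⟨Rj, fun u hu => by simpa [Real.norm_eq_abs] using hRj u hu⟩
  have hb2 : ∀ j : Fin n, ∃ Rj : ℝ, ∀ u ∈ Set.Icc (-τb) (1:ℝ), |zI j u| ≤ Rj := by
    intro j
    obtain ⟨Rj, hRj⟩ := isCompact_Icc.exists_bound_of_continuousOn (hcontI j).continuousOn
    exact ⟨Rj, fun u hu => by simpa [Real.norm_eq_abs] using hRj u hu⟩
  choose R1 hR1 using hb1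
  choose R2 hR2 using hb2
  set R : ℝ := Finset.univ.sup' Finset.univ_nonempty (fun j => max (R1 j) (max (R2 j) 0))
    with hRdef
  have hRb : ∀ j : Fin n, ∀ u ∈ Set.Icc (-τb) (1:ℝ), |zR j u| ≤ R ∧ |zI j u| ≤ R := by
    intro j u hu
    have h := Finset.le_sup' (fun j => max (R1 j) (max (R2 j) 0)) (Finset.mem_univ j)
    exact ⟨le_trans (hR1 j u hu) (le_trans (le_max_left _ _) h),
      le_trans (hR2 j u hu) (le_trans (le_max_left _ _) (le_trans (le_max_right _ _) h))⟩
  have hRnn : 0 ≤ R := by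
    obtain ⟨j⟩ := (inferInstance : Nonempty (Fin n))
    have h := Finset.le_sup' (fun j => max (R1 j) (max (R2 j) 0)) (Finset.mem_univ j)
    exact le_trans (le_max_right _ _) (le_trans (le_max_right _ _) h)
  set wmin : ℝ := Finset.univ.inf' Finset.univ_nonempty (fun j => min (ξ j) (φ j))
    with hwmindef
  have hwminpos : 0 < wmin := by
    rw [hwmindef, Finset.lt_inf'_iff]
    exact fun j _ => lt_min (hξ j) (hφ j)
  have hwminle : ∀ j, wmin ≤ ξ j ∧ wmin ≤ φ j := fun j =>
    ⟨le_trans (Finset.inf'_le _ (Finset.mem_univ j)) (min_le_left _ _),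
     le_trans (Finset.inf'_le _ (Finset.mem_univ j)) (min_le_right _ _)⟩
  set C0 : ℝ := 2 * R / wmin with hC0def
  have hC0 : 0 ≤ C0 := div_nonneg (by linarith) hwminpos.le
  have hwc : ∀ j : Fin n, 2 * R ≤ ξ j * C0 ∧ 2 * R ≤ φ j * C0 := by
    intro j
    have he : wmin * C0 = 2 * R := by
      rw [hC0def]; field_simp
    constructor
    · calc 2 * R = wmin * C0 := he.symm
        _ ≤ ξ j * C0 := mul_le_mul_of_nonneg_right (hwminle j).1 hC0
    · calc 2 * R = wmin * C0 := he.symm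
        _ ≤ φ j * C0 := mul_le_mul_of_nonneg_right (hwminle j).2 hC0
  have hstep : ∀ r, 0 ≤ r → r ≤ 1 → ∀ t, 0 ≤ t → ∀ j,
      |zR j (t + r) - zR j t| ≤ ξ j * (C0 * Real.exp (-δ * t)) ∧
      |zI j (t + r) - zI j t| ≤ φ j * (C0 * Real.exp (-δ * t)) := by
    intro r hr0 hr1
    have hshift := shift_solution n d aR aI bR bI τ uR uI fR fI gR gI zR zI hz r hr0
    have hMgood : ∀ j s, -τb ≤ s → s ≤ 0 →
        |zR j (s + r) - zR j s| ≤ ξ j * C0 ∧ |zI j (s + r) - zI j s| ≤ φ j * C0 := by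
      intro j s h1 h2
      have hmem1 : s + r ∈ Set.Icc (-τb) (1:ℝ) := ⟨by linarith, by linarith⟩
      have hmem2 : s ∈ Set.Icc (-τb) (1:ℝ) := ⟨h1, by linarith⟩
      constructor
      · calc |zR j (s + r) - zR j s| ≤ |zR j (s + r)| + |zR j s| := abs_sub _ _
          _ ≤ 2 * R := by linarith [(hRb j _ hmem1).1, (hRb j _ hmem2).1]
          _ ≤ ξ j * C0 := (hwc j).1
      · calc |zI j (s + r) - zI j s| ≤ |zI j (s + r)| + |zI j s| := abs_sub _ _
          _ ≤ 2 * R := by linarith [(hRb j _ hmem1).2, (hRb j _ hmem2).2]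
          _ ≤ φ j * C0 := (hwc j).2
    exact decay n hn d aR aI bR bI τ uR uI fR fI gR gI lRR lRI lIR lII mRR mRI mIR mII
      hf hg ξ φ hξ hφ τb hτ0 hτble hτb0 δ hδ hδ3 hδ4 _ _ zR zI hshift hz C0 hMgood
  set x : ℝ := Real.exp (-δ) with hxdef
  have hx0 : 0 ≤ x := (Real.exp_pos _).le
  have hx1 : x < 1 := by
    rw [hxdef, ← Real.exp_zero]
    exact Real.exp_lt_exp.2 (by linarith)
  have hchain : ∀ m : ℕ, ∀ j, ∀ t, 0 ≤ t → ∀ r, 0 ≤ r → r ≤ 1 →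
      |zR j (t + m + r) - zR j t| ≤
        ξ j * (C0 * Real.exp (-δ * t) * ∑ i ∈ Finset.range (m+1), x ^ i) ∧
      |zI j (t + m + r) - zI j t| ≤
        φ j * (C0 * Real.exp (-δ * t) * ∑ i ∈ Finset.range (m+1), x ^ i) := by
    intro m
    induction m with
    | zero =>
      intro j t ht r hr0 hr1
      have h := hstep r hr0 hr1 t ht j
      constructor
      · simpa using h.1
      · simpa using h.2
    | succ m ih =>
      intro j t ht r hr0 hr1
      have h1 := ih j (t + 1) (by linarith) r hr0 hr1
      have h2 := hstep 1 (by norm_num) le_rfl t ht j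
      have harg : t + ((m:ℝ) + 1) + r = t + 1 + (m:ℝ) + r := by ring
      have hexp : Real.exp (-δ * (t + 1)) = Real.exp (-δ * t) * x := by
        rw [hxdef, ← Real.exp_add]
        congr 1
        ring
      have hgeom : ∑ i ∈ Finset.range (m + 1 + 1), x ^ i
          = x * ∑ i ∈ Finset.range (m + 1), x ^ i + 1 := geom_sum_succ
      constructor
      · have htri : |zR j (t + ((m:ℕ):ℝ) + 1 + r) - zR j t| ≤
            |zR j (t + 1 + (m:ℝ) + r) - zR j (t + 1)| + |zR j (t + 1) - zR j t| := by
          have e : zR j (t + ((m:ℕ):ℝ) + 1 + r) - zR j t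
              = (zR j (t + 1 + (m:ℝ) + r) - zR j (t + 1)) + (zR j (t + 1) - zR j t) := by
            rw [show t + ((m:ℕ):ℝ) + 1 + r = t + 1 + (m:ℝ) + r by push_cast; ring]
            ring
          rw [e]
          exact abs_add_le _ _
        have hfinal : ξ j * (C0 * Real.exp (-δ * (t+1)) * ∑ i ∈ Finset.range (m+1), x ^ i)
            + ξ j * (C0 * Real.exp (-δ * t))
            = ξ j * (C0 * Real.exp (-δ * t) * ∑ i ∈ Finset.range (m+1+1), x ^ i) := by
          rw [hgeom, hexp]; ring
        have hcast : ((m+1 : ℕ) : ℝ) = (m:ℝ) + 1 := by push_cast; ring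
        rw [show t + ((m+1 : ℕ) : ℝ) + r = t + ((m:ℕ):ℝ) + 1 + r by rw [hcast]; ring]
        calc |zR j (t + ((m:ℕ):ℝ) + 1 + r) - zR j t|
            ≤ |zR j (t + 1 + (m:ℝ) + r) - zR j (t + 1)| + |zR j (t + 1) - zR j t| := htri
          _ ≤ ξ j * (C0 * Real.exp (-δ * (t+1)) * ∑ i ∈ Finset.range (m+1), x ^ i)
              + ξ j * (C0 * Real.exp (-δ * t)) := add_le_add h1.1 h2.1
          _ = ξ j * (C0 * Real.exp (-δ * t) * ∑ i ∈ Finset.range (m+1+1), x ^ i) := hfinal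
      · have htri : |zI j (t + ((m:ℕ):ℝ) + 1 + r) - zI j t| ≤
            |zI j (t + 1 + (m:ℝ) + r) - zI j (t + 1)| + |zI j (t + 1) - zI j t| := by
          have e : zI j (t + ((m:ℕ):ℝ) + 1 + r) - zI j t
              = (zI j (t + 1 + (m:ℝ) + r) - zI j (t + 1)) + (zI j (t + 1) - zI j t) := by
            rw [show t + ((m:ℕ):ℝ) + 1 + r = t + 1 + (m:ℝ) + r by push_cast; ring]
            ring
          rw [e]
          exact abs_add_le _ _
        have hfinal : φ j * (C0 * Real.exp (-δ * (t+1)) * ∑ i ∈ Finset.range (m+1), x ^ i)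
            + φ j * (C0 * Real.exp (-δ * t))
            = φ j * (C0 * Real.exp (-δ * t) * ∑ i ∈ Finset.range (m+1+1), x ^ i) := by
          rw [hgeom, hexp]; ring
        have hcast : ((m+1 : ℕ) : ℝ) = (m:ℝ) + 1 := by push_cast; ring
        rw [show t + ((m+1 : ℕ) : ℝ) + r = t + ((m:ℕ):ℝ) + 1 + r by rw [hcast]; ring]
        calc |zI j (t + ((m:ℕ):ℝ) + 1 + r) - zI j t|
            ≤ |zI j (t + 1 + (m:ℝ) + r) - zI j (t + 1)| + |zI j (t + 1) - zI j t| := htri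
          _ ≤ φ j * (C0 * Real.exp (-δ * (t+1)) * ∑ i ∈ Finset.range (m+1), x ^ i)
              + φ j * (C0 * Real.exp (-δ * t)) := add_le_add h1.2 h2.2
          _ = φ j * (C0 * Real.exp (-δ * t) * ∑ i ∈ Finset.range (m+1+1), x ^ i) := hfinal
  set C1 : ℝ := C0 * (1 / (1 - x)) with hC1def
  have hC1nn : 0 ≤ C1 := by
    have h : (0:ℝ) < 1 - x := by linarith
    have h2 : (0:ℝ) ≤ 1 / (1 - x) := by positivity
    exact mul_nonneg hC0 h2
  have hall : ∀ j t, 0 ≤ t → ∀ s, 0 ≤ s →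
      |zR j (t + s) - zR j t| ≤ ξ j * C1 * Real.exp (-δ * t) ∧
      |zI j (t + s) - zI j t| ≤ φ j * C1 * Real.exp (-δ * t) := by
    intro j t ht s hs
    set m : ℕ := Nat.floor s with hmdef
    have hr0 : 0 ≤ s - m := by
      have := Nat.floor_le hs
      linarith
    have hr1 : s - m ≤ 1 := by
      have := (Nat.lt_floor_add_one s).le
      linarith
    have h := hchain m j t ht (s - m) hr0 hr1
    have harg : t + (m:ℝ) + (s - m) = t + s := by ring
    rw [harg] at h
    have hS := geom_partial_bound x hx0 hx1 (m + 1)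
    have hexpnn : (0:ℝ) < Real.exp (-δ * t) := Real.exp_pos _
    constructor
    · calc |zR j (t + s) - zR j t|
          ≤ ξ j * (C0 * Real.exp (-δ * t) * ∑ i ∈ Finset.range (m+1), x ^ i) := h.1
        _ = (ξ j * C0 * Real.exp (-δ * t)) * ∑ i ∈ Finset.range (m+1), x ^ i := by ring
        _ ≤ (ξ j * C0 * Real.exp (-δ * t)) * (1 / (1 - x)) := by
            apply mul_le_mul_of_nonneg_left hS
            have := (hξ j).le
            positivity
        _ = ξ j * C1 * Real.exp (-δ * t) := by rw [hC1def]; ring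
    · calc |zI j (t + s) - zI j t|
          ≤ φ j * (C0 * Real.exp (-δ * t) * ∑ i ∈ Finset.range (m+1), x ^ i) := h.2
        _ = (φ j * C0 * Real.exp (-δ * t)) * ∑ i ∈ Finset.range (m+1), x ^ i := by ring
        _ ≤ (φ j * C0 * Real.exp (-δ * t)) * (1 / (1 - x)) := by
            apply mul_le_mul_of_nonneg_left hS
            have := (hφ j).le
            positivity
        _ = φ j * C1 * Real.exp (-δ * t) := by rw [hC1def]; ring
  -- Cauchy limits
  have hlimR : ∀ j, ∃ L, Filter.Tendsto (fun mm : ℕ => zR j mm) Filter.atTop (nhds L) := by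
    intro j
    apply cauchySeq_tendsto_of_complete
    apply cauchySeq_of_le_geometric x (ξ j * C1) hx1
    intro mm
    rw [Real.dist_eq, abs_sub_comm]
    have h := (hall j mm (Nat.cast_nonneg mm) 1 zero_le_one).1
    have hpow : Real.exp (-δ * mm) = x ^ mm := by
      rw [hxdef, ← Real.exp_nat_mul]
      congr 1
      ring
    push_cast
    calc |zR j ((mm:ℝ) + 1) - zR j mm| ≤ ξ j * C1 * Real.exp (-δ * mm) := h
      _ = ξ j * C1 * x ^ mm := by rw [hpow]
  have hlimI : ∀ j, ∃ L, Filter.Tendsto (fun mm : ℕ => zI j mm) Filter.atTop (nhds L) := by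
    intro j
    apply cauchySeq_tendsto_of_complete
    apply cauchySeq_of_le_geometric x (φ j * C1) hx1
    intro mm
    rw [Real.dist_eq, abs_sub_comm]
    have h := (hall j mm (Nat.cast_nonneg mm) 1 zero_le_one).2
    have hpow : Real.exp (-δ * mm) = x ^ mm := by
      rw [hxdef, ← Real.exp_nat_mul]
      congr 1
      ring
    push_cast
    calc |zI j ((mm:ℝ) + 1) - zI j mm| ≤ φ j * C1 * Real.exp (-δ * mm) := h
      _ = φ j * C1 * x ^ mm := by rw [hpow]
  choose zbR hzbR using hlimR
  choose zbI hzbI using hlimI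
  have hkeyR : ∀ j t, 0 ≤ t → |zR j t - zbR j| ≤ ξ j * C1 * Real.exp (-δ * t) := by
    intro j t ht
    have htend : Filter.Tendsto (fun mm : ℕ => |zR j t - zR j mm|) Filter.atTop
        (nhds |zR j t - zbR j|) := (tendsto_const_nhds.sub (hzbR j)).abs
    apply le_of_tendsto htend
    filter_upwards [Filter.eventually_ge_atTop (Nat.ceil t)] with mm hmm
    have hts : t ≤ (mm:ℝ) := le_trans (Nat.le_ceil t) (by exact_mod_cast hmm)
    have h := (hall j t ht ((mm:ℝ) - t) (by linarith)).1
    rw [show t + ((mm:ℝ) - t) = (mm:ℝ) by ring] at h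
    rw [abs_sub_comm] at h
    exact h
  have hkeyI : ∀ j t, 0 ≤ t → |zI j t - zbI j| ≤ φ j * C1 * Real.exp (-δ * t) := by
    intro j t ht
    have htend : Filter.Tendsto (fun mm : ℕ => |zI j t - zI j mm|) Filter.atTop
        (nhds |zI j t - zbI j|) := (tendsto_const_nhds.sub (hzbI j)).abs
    apply le_of_tendsto htend
    filter_upwards [Filter.eventually_ge_atTop (Nat.ceil t)] with mm hmm
    have hts : t ≤ (mm:ℝ) := le_trans (Nat.le_ceil t) (by exact_mod_cast hmm)
    have h := (hall j t ht ((mm:ℝ) - t) (by linarith)).2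
    rw [show t + ((mm:ℝ) - t) = (mm:ℝ) by ring] at h
    rw [abs_sub_comm] at h
    exact h
  have htR : ∀ j, Filter.Tendsto (zR j) Filter.atTop (nhds (zbR j)) := by
    intro j
    rw [← tendsto_sub_nhds_zero_iff]
    apply squeeze_zero_norm' ?_ (exp_decay_tendsto δ hδ (ξ j * C1))
    filter_upwards [Filter.eventually_ge_atTop (0:ℝ)] with t ht
    simpa [Real.norm_eq_abs] using hkeyR j t ht
  have htI : ∀ j, Filter.Tendsto (zI j) Filter.atTop (nhds (zbI j)) := by
    intro j
    rw [← tendsto_sub_nhds_zero_iff]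
    apply squeeze_zero_norm' ?_ (exp_decay_tendsto δ hδ (φ j * C1))
    filter_upwards [Filter.eventually_ge_atTop (0:ℝ)] with t ht
    simpa [Real.norm_eq_abs] using hkeyI j t ht
  have hdelR : ∀ (c : ℝ) j, Filter.Tendsto (fun t => zR j (t - c)) Filter.atTop
      (nhds (zbR j)) := by
    intro c j
    apply (htR j).comp
    simpa [sub_eq_add_neg] using Filter.tendsto_atTop_add_const_right Filter.atTop (-c)
      Filter.tendsto_id
  have hdelI : ∀ (c : ℝ) j, Filter.Tendsto (fun t => zI j (t - c)) Filter.atTop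
      (nhds (zbI j)) := by
    intro c j
    apply (htI j).comp
    simpa [sub_eq_add_neg] using Filter.tendsto_atTop_add_const_right Filter.atTop (-c)
      Filter.tendsto_id
  refine ⟨zbR, zbI, ?_, ?_⟩
  · intro j
    apply tendsto_deriv_zero (zR j) (hz.1 j) (zbR j) _ (htR j)
    apply Filter.Tendsto.congr' (Filter.eventuallyEq_of_mem
      (Filter.eventually_ge_atTop (0:ℝ)) (fun t ht => (hz.2.2.1 j t ht).symm))
    refine Filter.Tendsto.add (Filter.Tendsto.add (Filter.Tendsto.add ?_ ?_) ?_)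
      tendsto_const_nhds
    · exact (htR j).const_mul (-(d j))
    · apply tendsto_finset_sum
      intro k _
      exact (((((hf k).1.continuous.tendsto (zbR k, zbI k)).comp
        ((htR k).prodMk_nhds (htI k))).const_mul (aR j k)).sub
        ((((hf k).2.1.continuous.tendsto (zbR k, zbI k)).comp
        ((htR k).prodMk_nhds (htI k))).const_mul (aI j k)))
    · apply tendsto_finset_sum
      intro k _
      exact (((((hg k).1.continuous.tendsto (zbR k, zbI k)).comp
        ((hdelR (τ j k) k).prodMk_nhds (hdelI (τ j k) k))).const_mul (bR j k)).sub
        ((((hg k).2.1.continuous.tendsto (zbR k, zbI k)).comp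
        ((hdelR (τ j k) k).prodMk_nhds (hdelI (τ j k) k))).const_mul (bI j k)))
  · intro j
    apply tendsto_deriv_zero (zI j) (hz.2.1 j) (zbI j) _ (htI j)
    apply Filter.Tendsto.congr' (Filter.eventuallyEq_of_mem
      (Filter.eventually_ge_atTop (0:ℝ)) (fun t ht => (hz.2.2.2 j t ht).symm))
    refine Filter.Tendsto.add (Filter.Tendsto.add (Filter.Tendsto.add ?_ ?_) ?_)
      tendsto_const_nhds
    · exact (htI j).const_mul (-(d j))
    · apply tendsto_finset_sum
      intro k _
      exact (((((hf k).2.1.continuous.tendsto (zbR k, zbI k)).comp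
        ((htR k).prodMk_nhds (htI k))).const_mul (aR j k)).add
        ((((hf k).1.continuous.tendsto (zbR k, zbI k)).comp
        ((htR k).prodMk_nhds (htI k))).const_mul (aI j k)))
    · apply tendsto_finset_sum
      intro k _
      exact (((((hg k).2.1.continuous.tendsto (zbR k, zbI k)).comp
        ((hdelR (τ j k) k).prodMk_nhds (hdelI (τ j k) k))).const_mul (bR j k)).add
        ((((hg k).1.continuous.tendsto (zbR k, zbI k)).comp
        ((hdelR (τ j k) k).prodMk_nhds (hdelI (τ j k) k))).const_mul (bI j k)))

set_option maxHeartbeats 2000000 in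
theorem stmt1
    (n : ℕ) (hn : 1 ≤ n)
    (d : Fin n → ℝ) (hd : ∀ j, 0 < d j)
    (aR aI bR bI τ : Fin n → Fin n → ℝ) (hτ : ∀ j k, 0 ≤ τ j k)
    (uR uI : Fin n → ℝ)
    (fR fI gR gI : Fin n → ℝ → ℝ → ℝ)
    (lRR lRI lIR lII mRR mRI mIR mII : Fin n → ℝ)
    (hl : ∀ j, 0 < lRR j ∧ 0 < lRI j ∧ 0 < lIR j ∧ 0 < lII j)
    (hm : ∀ j, 0 < mRR j ∧ 0 < mRI j ∧ 0 < mIR j ∧ 0 < mII j)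
    (hf : ∀ j, CondH1 (fR j) (fI j) (lRR j) (lRI j) (lIR j) (lII j))
    (hg : ∀ j, CondH2 (gR j) (gI j) (mRR j) (mRI j) (mIR j) (mII j))
    (ξ φ : Fin n → ℝ) (hξ : ∀ j, 0 < ξ j) (hφ : ∀ j, 0 < φ j)
    (hT3 : ∀ j : Fin n,
      ξ j * (-(d j) + max (aR j j) 0 * lRR j + max (-(aI j j)) 0 * lIR j)
      + (∑ k ∈ Finset.univ.erase j, ξ k * |aR j k| * lRR k)
      + (∑ k, φ k * |aR j k| * lRI k)
      + (∑ k ∈ Finset.univ.erase j, ξ k * |aI j k| * lIR k)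
      + (∑ k, φ k * |aI j k| * lII k)
      + (∑ k, ξ k * |bR j k| * mRR k) + (∑ k, φ k * |bR j k| * mRI k)
      + (∑ k, ξ k * |bI j k| * mIR k) + (∑ k, φ k * |bI j k| * mII k) < 0)
    (hT4 : ∀ j : Fin n,
      φ j * (-(d j) + max (aR j j) 0 * lII j + max (aI j j) 0 * lRI j)
      + (∑ k, ξ k * |aR j k| * lIR k)
      + (∑ k ∈ Finset.univ.erase j, φ k * |aR j k| * lII k)
      + (∑ k, ξ k * |aI j k| * lRR k)
      + (∑ k ∈ Finset.univ.erase j, φ k * |aI j k| * lRI k)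
      + (∑ k, ξ k * |bR j k| * mIR k) + (∑ k, φ k * |bR j k| * mII k)
      + (∑ k, ξ k * |bI j k| * mRR k) + (∑ k, φ k * |bI j k| * mRI k) < 0)
    (hsol : ∃ zR zI, IsSolution n d aR aI bR bI τ uR uI fR fI gR gI zR zI) :
    ∃ zbR zbI : Fin n → ℝ,
      IsEquilibrium n d aR aI bR bI uR uI fR fI gR gI zbR zbI ∧
      (∀ wR wI : Fin n → ℝ,
        IsEquilibrium n d aR aI bR bI uR uI fR fI gR gI wR wI → wR = zbR ∧ wI = zbI) ∧
      (∀ zR zI : Fin n → ℝ → ℝ,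
        IsSolution n d aR aI bR bI τ uR uI fR fI gR gI zR zI →
        ∃ c δ : ℝ, 0 < c ∧ 0 < δ ∧ ∀ t : ℝ, 0 ≤ t →
          Real.sqrt ((∑ j, (zR j t - zbR j) ^ 2) + ∑ j, (zI j t - zbI j) ^ 2)
            ≤ c * Real.exp (-δ * t)) := by
  haveI : Nonempty (Fin n) := ⟨⟨0, hn⟩⟩
  set τb : ℝ := Finset.univ.sup' Finset.univ_nonempty
    (fun j => Finset.univ.sup' Finset.univ_nonempty (τ j)) with hτbdef
  have hτble : ∀ j k, τ j k ≤ τb := by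
    intro j k
    calc τ j k ≤ Finset.univ.sup' Finset.univ_nonempty (τ j) :=
          Finset.le_sup' _ (Finset.mem_univ k)
      _ ≤ τb := Finset.le_sup' (fun j => Finset.univ.sup' Finset.univ_nonempty (τ j))
          (Finset.mem_univ j)
  obtain ⟨j0⟩ := (inferInstance : Nonempty (Fin n))
  have hτb0 : 0 ≤ τb := le_trans (hτ j0 j0) (hτble j0 j0)
  -- choose δ
  obtain ⟨δ, hδpos, hδall⟩ := exists_delta
    (ι := Fin n × Bool)
    (fun p => cond p.2
      (φ p.1 * (-(d p.1) + max (aR p.1 p.1) 0 * lII p.1 + max (aI p.1 p.1) 0 * lRI p.1)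
       + (∑ k, ξ k * |aR p.1 k| * lIR k)
       + (∑ k ∈ Finset.univ.erase p.1, φ k * |aR p.1 k| * lII k)
       + (∑ k, ξ k * |aI p.1 k| * lRR k)
       + (∑ k ∈ Finset.univ.erase p.1, φ k * |aI p.1 k| * lRI k))
      (ξ p.1 * (-(d p.1) + max (aR p.1 p.1) 0 * lRR p.1 + max (-(aI p.1 p.1)) 0 * lIR p.1)
       + (∑ k ∈ Finset.univ.erase p.1, ξ k * |aR p.1 k| * lRR k)
       + (∑ k, φ k * |aR p.1 k| * lRI k)
       + (∑ k ∈ Finset.univ.erase p.1, ξ k * |aI p.1 k| * lIR k)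
       + (∑ k, φ k * |aI p.1 k| * lII k)))
    (fun p => cond p.2
      ((∑ k, ξ k * |bR p.1 k| * mIR k) + (∑ k, φ k * |bR p.1 k| * mII k)
       + (∑ k, ξ k * |bI p.1 k| * mRR k) + (∑ k, φ k * |bI p.1 k| * mRI k))
      ((∑ k, ξ k * |bR p.1 k| * mRR k) + (∑ k, φ k * |bR p.1 k| * mRI k)
       + (∑ k, ξ k * |bI p.1 k| * mIR k) + (∑ k, φ k * |bI p.1 k| * mII k)))
    (fun p => cond p.2 (φ p.1) (ξ p.1)) τb
    (by
      rintro ⟨j, c⟩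
      cases c
      · simp only [Bool.cond_false]
        linarith [hT3 j]
      · simp only [Bool.cond_true]
        linarith [hT4 j])
  have hδ3 : ∀ j : Fin n,
      (ξ j * (-(d j) + max (aR j j) 0 * lRR j + max (-(aI j j)) 0 * lIR j)
       + (∑ k ∈ Finset.univ.erase j, ξ k * |aR j k| * lRR k)
       + (∑ k, φ k * |aR j k| * lRI k)
       + (∑ k ∈ Finset.univ.erase j, ξ k * |aI j k| * lIR k)
       + (∑ k, φ k * |aI j k| * lII k))
      + Real.exp (δ * τb) *
        ((∑ k, ξ k * |bR j k| * mRR k) + (∑ k, φ k * |bR j k| * mRI k)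
         + (∑ k, ξ k * |bI j k| * mIR k) + (∑ k, φ k * |bI j k| * mII k))
      + δ * ξ j < 0 := fun j => hδall (j, false)
  have hδ4 : ∀ j : Fin n,
      (φ j * (-(d j) + max (aR j j) 0 * lII j + max (aI j j) 0 * lRI j)
       + (∑ k, ξ k * |aR j k| * lIR k)
       + (∑ k ∈ Finset.univ.erase j, φ k * |aR j k| * lII k)
       + (∑ k, ξ k * |aI j k| * lRR k)
       + (∑ k ∈ Finset.univ.erase j, φ k * |aI j k| * lRI k))
      + Real.exp (δ * τb) *
        ((∑ k, ξ k * |bR j k| * mIR k) + (∑ k, φ k * |bR j k| * mII k)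
         + (∑ k, ξ k * |bI j k| * mRR k) + (∑ k, φ k * |bI j k| * mRI k))
      + δ * φ j < 0 := fun j => hδall (j, true)
  obtain ⟨zR0, zI0, hz0⟩ := hsol
  obtain ⟨zbR, zbI, heqb⟩ := exists_equilibrium n hn d aR aI bR bI τ uR uI fR fI gR gI
    lRR lRI lIR lII mRR mRI mIR mII hf hg ξ φ hξ hφ τb hτ hτble hτb0 δ hδpos hδ3 hδ4
    zR0 zI0 hz0
  have hconstb := const_solution n d aR aI bR bI τ uR uI fR fI gR gI zbR zbI heqb
  set wmin : ℝ := Finset.univ.inf' Finset.univ_nonempty (fun j => min (ξ j) (φ j))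
    with hwmindef
  have hwminpos : 0 < wmin := by
    rw [hwmindef, Finset.lt_inf'_iff]
    exact fun j _ => lt_min (hξ j) (hφ j)
  have hwminle : ∀ j, wmin ≤ ξ j ∧ wmin ≤ φ j := fun j =>
    ⟨le_trans (Finset.inf'_le _ (Finset.mem_univ j)) (min_le_left _ _),
     le_trans (Finset.inf'_le _ (Finset.mem_univ j)) (min_le_right _ _)⟩
  refine ⟨zbR, zbI, heqb, ?_, ?_⟩
  · -- uniqueness
    intro wR wI hweq
    have hconstw := const_solution n d aR aI bR bI τ uR uI fR fI gR gI wR wI hweq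
    set M2 : ℝ := Finset.univ.sup' Finset.univ_nonempty
      (fun j => max (|wR j - zbR j| / ξ j) (|wI j - zbI j| / φ j)) with hM2def
    have hM2 : ∀ j s, -τb ≤ s → s ≤ 0 →
        |wR j - zbR j| ≤ ξ j * M2 ∧ |wI j - zbI j| ≤ φ j * M2 := by
      intro j s _ _
      have h := Finset.le_sup' (fun j => max (|wR j - zbR j| / ξ j) (|wI j - zbI j| / φ j))
        (Finset.mem_univ j)
      constructor
      · have h1 : |wR j - zbR j| / ξ j ≤ M2 := le_trans (le_max_left _ _) h
        have h2 := (div_le_iff₀ (hξ j)).1 h1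
        linarith
      · have h1 : |wI j - zbI j| / φ j ≤ M2 := le_trans (le_max_right _ _) h
        have h2 := (div_le_iff₀ (hφ j)).1 h1
        linarith
    have hdec := decay n hn d aR aI bR bI τ uR uI fR fI gR gI
      lRR lRI lIR lII mRR mRI mIR mII hf hg ξ φ hξ hφ τb hτ hτble hτb0 δ hδpos hδ3 hδ4
      (fun j _ => wR j) (fun j _ => wI j) (fun j _ => zbR j) (fun j _ => zbI j)
      hconstw hconstb M2 hM2
    constructor
    · funext j
      have hzero : |wR j - zbR j| ≤ 0 := by
        apply ge_of_tendsto (exp_decay_tendsto δ hδpos (ξ j * M2))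
        filter_upwards [Filter.eventually_ge_atTop (0:ℝ)] with t ht
        have h := (hdec t ht j).1
        calc |wR j - zbR j| ≤ ξ j * (M2 * Real.exp (-δ * t)) := h
          _ = ξ j * M2 * Real.exp (-δ * t) := by ring
      have := abs_nonneg (wR j - zbR j)
      have h0 : |wR j - zbR j| = 0 := le_antisymm hzero this
      have := abs_eq_zero.1 h0
      linarith [sub_eq_zero.1 this]
    · funext j
      have hzero : |wI j - zbI j| ≤ 0 := by
        apply ge_of_tendsto (exp_decay_tendsto δ hδpos (φ j * M2))
        filter_upwards [Filter.eventually_ge_atTop (0:ℝ)] with t ht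
        have h := (hdec t ht j).2
        calc |wI j - zbI j| ≤ φ j * (M2 * Real.exp (-δ * t)) := h
          _ = φ j * M2 * Real.exp (-δ * t) := by ring
      have := abs_nonneg (wI j - zbI j)
      have h0 : |wI j - zbI j| = 0 := le_antisymm hzero this
      have := abs_eq_zero.1 h0
      linarith [sub_eq_zero.1 this]
  · -- stability
    intro zR zI hzsol
    have hb1 : ∀ j : Fin n, ∃ Bj : ℝ, ∀ s ∈ Set.Icc (-τb) (0:ℝ), |zR j s - zbR j| ≤ Bj := by
      intro j
      obtain ⟨Bj, hBj⟩ := isCompact_Icc.exists_bound_of_continuousOn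
        (((hzsol.1 j).continuous.sub continuous_const).continuousOn)
      exact ⟨Bj, fun s hs => by simpa [Real.norm_eq_abs] using hBj s hs⟩
    have hb2 : ∀ j : Fin n, ∃ Bj : ℝ, ∀ s ∈ Set.Icc (-τb) (0:ℝ), |zI j s - zbI j| ≤ Bj := by
      intro j
      obtain ⟨Bj, hBj⟩ := isCompact_Icc.exists_bound_of_continuousOn
        (((hzsol.2.1 j).continuous.sub continuous_const).continuousOn)
      exact ⟨Bj, fun s hs => by simpa [Real.norm_eq_abs] using hBj s hs⟩
    choose B1 hB1 using hb1
    choose B2 hB2 using hb2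
    set SB : ℝ := Finset.univ.sup' Finset.univ_nonempty
      (fun j => max (B1 j) (max (B2 j) 0)) with hSBdef
    have hSBnn : 0 ≤ SB := by
      have h := Finset.le_sup' (fun j => max (B1 j) (max (B2 j) 0)) (Finset.mem_univ j0)
      exact le_trans (le_trans (le_max_right _ _) (le_max_right _ _)) h
    have hSBb : ∀ j, B1 j ≤ SB ∧ B2 j ≤ SB := by
      intro j
      have h := Finset.le_sup' (fun j => max (B1 j) (max (B2 j) 0)) (Finset.mem_univ j)
      exact ⟨le_trans (le_max_left _ _) h,
        le_trans (le_trans (le_max_left _ _) (le_max_right _ _)) h⟩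
    set M' : ℝ := SB / wmin with hM'def
    have hM'0 : 0 ≤ M' := div_nonneg hSBnn hwminpos.le
    have hwM : wmin * M' = SB := by
      rw [hM'def]; field_simp
    have hM : ∀ j s, -τb ≤ s → s ≤ 0 →
        |zR j s - zbR j| ≤ ξ j * M' ∧ |zI j s - zbI j| ≤ φ j * M' := by
      intro j s h1 h2
      have hmem : s ∈ Set.Icc (-τb) (0:ℝ) := ⟨h1, h2⟩
      constructor
      · calc |zR j s - zbR j| ≤ B1 j := hB1 j s hmem
          _ ≤ SB := (hSBb j).1
          _ = wmin * M' := hwM.symm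
          _ ≤ ξ j * M' := mul_le_mul_of_nonneg_right (hwminle j).1 hM'0
      · calc |zI j s - zbI j| ≤ B2 j := hB2 j s hmem
          _ ≤ SB := (hSBb j).2
          _ = wmin * M' := hwM.symm
          _ ≤ φ j * M' := mul_le_mul_of_nonneg_right (hwminle j).2 hM'0
    have hdec := decay n hn d aR aI bR bI τ uR uI fR fI gR gI
      lRR lRI lIR lII mRR mRI mIR mII hf hg ξ φ hξ hφ τb hτ hτble hτb0 δ hδpos hδ3 hδ4
      zR zI (fun j _ => zbR j) (fun j _ => zbI j) hzsol hconstb M' hM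
    set S : ℝ := (∑ j, ξ j ^ 2) + ∑ j, φ j ^ 2 with hSdef
    have hSnn : 0 ≤ S := by
      rw [hSdef]
      have h1 : (0:ℝ) ≤ ∑ j, ξ j ^ 2 := Finset.sum_nonneg (fun j _ => sq_nonneg _)
      have h2 : (0:ℝ) ≤ ∑ j, φ j ^ 2 := Finset.sum_nonneg (fun j _ => sq_nonneg _)
      linarith
    refine ⟨Real.sqrt S * M' + 1, δ, ?_, hδpos, ?_⟩
    · have := mul_nonneg (Real.sqrt_nonneg S) hM'0
      linarith
    intro t ht
    have hexppos : (0:ℝ) < Real.exp (-δ * t) := Real.exp_pos _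
    set X : ℝ := M' * Real.exp (-δ * t) with hXdef
    have hXnn : 0 ≤ X := mul_nonneg hM'0 hexppos.le
    have h1 : ∀ j ∈ Finset.univ, (zR j t - zbR j) ^ 2 ≤ ξ j ^ 2 * X ^ 2 := by
      intro j _
      have hb := (hdec t ht j).1
      calc (zR j t - zbR j) ^ 2 = |zR j t - zbR j| ^ 2 := (sq_abs _).symm
        _ ≤ (ξ j * X) ^ 2 := by
            apply pow_le_pow_left₀ (abs_nonneg _)
            exact hb
        _ = ξ j ^ 2 * X ^ 2 := by ring
    have h2 : ∀ j ∈ Finset.univ, (zI j t - zbI j) ^ 2 ≤ φ j ^ 2 * X ^ 2 := by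
      intro j _
      have hb := (hdec t ht j).2
      calc (zI j t - zbI j) ^ 2 = |zI j t - zbI j| ^ 2 := (sq_abs _).symm
        _ ≤ (φ j * X) ^ 2 := by
            apply pow_le_pow_left₀ (abs_nonneg _)
            exact hb
        _ = φ j ^ 2 * X ^ 2 := by ring
    have hsum : (∑ j, (zR j t - zbR j) ^ 2) + ∑ j, (zI j t - zbI j) ^ 2 ≤ S * X ^ 2 := by
      have e1 : ∑ j, ξ j ^ 2 * X ^ 2 = (∑ j, ξ j ^ 2) * X ^ 2 := (Finset.sum_mul _ _ _).symm
      have e2 : ∑ j, φ j ^ 2 * X ^ 2 = (∑ j, φ j ^ 2) * X ^ 2 := (Finset.sum_mul _ _ _).symm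
      have s1 := Finset.sum_le_sum h1
      have s2 := Finset.sum_le_sum h2
      rw [hSdef]
      nlinarith [s1, s2, e1, e2]
    calc Real.sqrt ((∑ j, (zR j t - zbR j) ^ 2) + ∑ j, (zI j t - zbI j) ^ 2)
        ≤ Real.sqrt (S * X ^ 2) := Real.sqrt_le_sqrt hsum
      _ = Real.sqrt S * X := by
          rw [Real.sqrt_mul hSnn, Real.sqrt_sq hXnn]
      _ = (Real.sqrt S * M') * Real.exp (-δ * t) := by rw [hXdef]; ring
      _ ≤ (Real.sqrt S * M' + 1) * Real.exp (-δ * t) := by nlinarith [hexppos]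
end

section
/- Suppose (f_j^R, f_j^I) satisfy condition H2 with constants λ_j^{RR}, λ_j^{RI}, λ_j^{IR}, λ_j^{II} and (g_j^R, g_j^I) satisfy condition H2 with constants μ_j^{RR}, μ_j^{RI}, μ_j^{IR}, μ_j^{II}, for j = 1,…,n. Suppose there exist positive reals ξ_1,…,ξ_n, φ_1,…,φ_n such that for every j = 1,…,n both: (i) −ξ_j d_j + Σ_{k=1}^n ξ_k|a_{jk}^R|λ_k^{RR} + Σ_{k=1}^n φ_k|a_{jk}^R|λ_k^{RI} + Σ_{k=1}^n ξ_k|a_{jk}^I|λ_k^{IR} + Σ_{k=1}^n φ_k|a_{jk}^I|λ_k^{II} + Σ_{k=1}^n ξ_k|b_{jk}^R|μ_k^{RR} + Σ_{k=1}^n φ_k|b_{jk}^R|μ_k^{RI} + Σ_{k=1}^n ξ_k|b_{jk}^I|μ_k^{IR} + Σ_{k=1}^n φ_k|b_{jk}^I|μ_k^{II} < 0, and (ii) −φ_j d_j + Σ_{k=1}^n ξ_k|a_{jk}^R|λ_k^{IR} + Σ_{k=1}^n φ_k|a_{jk}^R|λ_k^{II} + Σ_{k=1}^n ξ_k|a_{jk}^I|λ_k^{RR}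 + Σ_{k=1}^n φ_k|a_{jk}^I|λ_k^{RI} + Σ_{k=1}^n ξ_k|b_{jk}^R|μ_k^{IR} + Σ_{k=1}^n φ_k|b_{jk}^R|μ_k^{II} + Σ_{k=1}^n ξ_k|b_{jk}^I|μ_k^{RR} + Σ_{k=1}^n φ_k|b_{jk}^I|μ_k^{RI} < 0. If the network admits at least one solution, then it has exactly one equilibrium Z̄ ∈ ℝ^{2n}, and for every solution Z(t) there exist constants c > 0 and δ > 0 such that ‖Z(t) − Z̄‖ ≤ c e^{−δt} (Euclidean norm) for all t ≥ 0. -/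
open Finset

open Finset

/-- 1-D mean value bound. -/
lemma lip1 {h : ℝ → ℝ} {L : ℝ} (hd : Differentiable ℝ h)
    (hb : ∀ x, |deriv h x| ≤ L) (a b : ℝ) : |h b - h a| ≤ L * |b - a| := by
  have := Convex.norm_image_sub_le_of_norm_deriv_le (f := h) (s := Set.univ)
    (fun x _ => hd x) (fun x _ => hb x) convex_univ (Set.mem_univ a) (Set.mem_univ b)
  simpa [Real.norm_eq_abs] using this

/-- 2-D Lipschitz bound from bounded partials. -/
lemma lip2 {f : ℝ → ℝ → ℝ} {L1 L2 : ℝ}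
    (hf : ContDiff ℝ 1 (fun p : ℝ × ℝ => f p.1 p.2))
    (h1 : ∀ x y, |deriv (fun s => f s y) x| ≤ L1)
    (h2 : ∀ x y, |deriv (fun s => f x s) y| ≤ L2) :
    ∀ x y x' y', |f x y - f x' y'| ≤ L1 * |x - x'| + L2 * |y - y'| := by
  intro x y x' y'
  have hdf : Differentiable ℝ (fun p : ℝ × ℝ => f p.1 p.2) := hf.differentiable one_ne_zero
  have hd1 : ∀ b : ℝ, Differentiable ℝ (fun s => f s b) := by
    intro b
    exact hdf.comp (differentiable_id.prodMk (differentiable_const b))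
  have hd2 : ∀ a : ℝ, Differentiable ℝ (fun s => f a s) := by
    intro a
    exact hdf.comp ((differentiable_const a).prodMk differentiable_id)
  have e1 : |f x y - f x' y| ≤ L1 * |x - x'| := lip1 (hd1 y) (fun u => h1 u y) x' x
  have e2 : |f x' y - f x' y'| ≤ L2 * |y - y'| := lip1 (hd2 x') (fun u => h2 x' u) y' y
  calc |f x y - f x' y'| = |(f x y - f x' y) + (f x' y - f x' y')| := by ring_nf
    _ ≤ |f x y - f x' y| + |f x' y - f x' y'| := abs_add_le _ _
    _ ≤ L1 * |x - x'| + L2 * |y - y'| := add_le_add e1 e2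

/-- Per-term bound used in the row-sum estimates. -/
lemma term_bound {A B lRR lRI lIR lII m ξk φk : ℝ} {dx dy f1d f2d : ℝ}
    (h1 : |f1d| ≤ lRR * dx + lRI * dy) (h2 : |f2d| ≤ lIR * dx + lII * dy)
    (hdx : dx ≤ ξk * m) (hdy : dy ≤ φk * m)
    (hlRR : 0 ≤ lRR) (hlRI : 0 ≤ lRI) (hlIR : 0 ≤ lIR) (hlII : 0 ≤ lII) :
    |A * f1d - B * f2d| ≤ (ξk * |A| * lRR + φk * |A| * lRI + ξk * |B| * lIR + φk * |B| * lII) * m := by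
  have t1 : |A * f1d - B * f2d| ≤ |A| * |f1d| + |B| * |f2d| := by
    calc |A * f1d - B * f2d| ≤ |A * f1d| + |B * f2d| := abs_sub _ _
      _ = |A| * |f1d| + |B| * |f2d| := by rw [abs_mul, abs_mul]
  have hA : (0:ℝ) ≤ |A| := abs_nonneg _
  have hB : (0:ℝ) ≤ |B| := abs_nonneg _
  have hf1 : (0:ℝ) ≤ |f1d| := abs_nonneg _
  have hf2 : (0:ℝ) ≤ |f2d| := abs_nonneg _
  nlinarith [mul_le_mul_of_nonneg_left h1 hA, mul_le_mul_of_nonneg_left h2 hB,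
    mul_le_mul_of_nonneg_left hdx (mul_nonneg hA hlRR),
    mul_le_mul_of_nonneg_left hdy (mul_nonneg hA hlRI),
    mul_le_mul_of_nonneg_left hdx (mul_nonneg hB hlIR),
    mul_le_mul_of_nonneg_left hdy (mul_nonneg hB hlII)]

/-- Eventual bound to the right of `t`. -/
lemma eventually_abs_le {w : ℝ → ℝ} {t c w' : ℝ} (hc : 0 < c)
    (hw : HasDerivAt w w' t) (hle : |w t| ≤ c)
    (h1 : w t = c → w' < 0) (h2 : w t = -c → 0 < w') :
    ∀ᶠ s in nhdsWithin t (Set.Ioi t), |w s| ≤ c := by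
  have hcont : ContinuousAt w t := hw.continuousAt
  rcases lt_or_eq_of_le hle with hlt | heq
  · have : ∀ᶠ s in nhds t, |w s| < c :=
      (hcont.abs).eventually_lt_const hlt
    exact (this.filter_mono nhdsWithin_le_nhds).mono fun s hs => hs.le
  · rcases (abs_eq hc.le).mp heq with hwt | hwt
    · -- w t = c, w' < 0
      have hw' := h1 hwt
      have hslope : Filter.Tendsto (slope w t) (nhdsWithin t {t}ᶜ) (nhds w') :=
        hasDerivAt_iff_tendsto_slope.mp hw
      have hslope' : ∀ᶠ s in nhdsWithin t (Set.Ioi t), slope w t s < 0 := by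
        have := (hslope.mono_left (nhdsWithin_mono t (by intro s hs; exact ne_of_gt hs))).eventually_lt_const hw'
        exact this
      have hup : ∀ᶠ s in nhdsWithin t (Set.Ioi t), w s ≤ c := by
        filter_upwards [hslope', self_mem_nhdsWithin] with s hs hmem
        have hst : (0:ℝ) < s - t := sub_pos.mpr hmem
        have h' : (w s - w t) / (s - t) < 0 := by rwa [slope_def_field] at hs
        have h3 := mul_neg_of_neg_of_pos h' hst
        rw [div_mul_cancel₀ _ (ne_of_gt hst)] at h3
        linarith
      have hlow : ∀ᶠ s in nhdsWithin t (Set.Ioi t), -c < w s := by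
        have : ∀ᶠ s in nhds t, -c < w s := hcont.eventually_const_lt (by linarith)
        exact this.filter_mono nhdsWithin_le_nhds
      filter_upwards [hup, hlow] with s h1' h2'
      exact abs_le.mpr ⟨h2'.le, h1'⟩
    · -- w t = -c, w' > 0
      have hw' := h2 hwt
      have hslope : Filter.Tendsto (slope w t) (nhdsWithin t {t}ᶜ) (nhds w') :=
        hasDerivAt_iff_tendsto_slope.mp hw
      have hslope' : ∀ᶠ s in nhdsWithin t (Set.Ioi t), 0 < slope w t s := by
        exact (hslope.mono_left (nhdsWithin_mono t (by intro s hs; exact ne_of_gt hs))).eventually_const_lt hw'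
      have hup : ∀ᶠ s in nhdsWithin t (Set.Ioi t), -c ≤ w s := by
        filter_upwards [hslope', self_mem_nhdsWithin] with s hs hmem
        have hst : (0:ℝ) < s - t := sub_pos.mpr hmem
        have h' : 0 < (w s - w t) / (s - t) := by rwa [slope_def_field] at hs
        have h3 := mul_pos h' hst
        rw [div_mul_cancel₀ _ (ne_of_gt hst)] at h3
        linarith
      have hlow : ∀ᶠ s in nhdsWithin t (Set.Ioi t), w s < c := by
        have : ∀ᶠ s in nhds t, w s < c := hcont.eventually_lt_const (by linarith)
        exact this.filter_mono nhdsWithin_le_nhds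
      filter_upwards [hup, hlow] with s h1' h2'
      exact abs_le.mpr ⟨h1', h2'.le⟩

lemma row_est {n : ℕ} (aR aI lRR lRI lIR lII ξ φ : Fin n → ℝ)
    (fR fI : Fin n → ℝ → ℝ → ℝ)
    (hl : ∀ j, 0 ≤ lRR j ∧ 0 ≤ lRI j ∧ 0 ≤ lIR j ∧ 0 ≤ lII j)
    (hlip : ∀ k x y x' y', |fR k x y - fR k x' y'| ≤ lRR k * |x - x'| + lRI k * |y - y'|)
    (hlip' : ∀ k x y x' y', |fI k x y - fI k x' y'| ≤ lIR k * |x - x'| + lII k * |y - y'|)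
    (p q p' q' : Fin n → ℝ) (m : ℝ)
    (hp : ∀ k, |p k - p' k| ≤ ξ k * m) (hq : ∀ k, |q k - q' k| ≤ φ k * m) :
    |(∑ k, (aR k * fR k (p k) (q k) - aI k * fI k (p k) (q k)))
      - ∑ k, (aR k * fR k (p' k) (q' k) - aI k * fI k (p' k) (q' k))|
      ≤ (∑ k, (ξ k * |aR k| * lRR k + φ k * |aR k| * lRI k
          + ξ k * |aI k| * lIR k + φ k * |aI k| * lII k)) * m := by
  rw [← Finset.sum_sub_distrib, Finset.sum_mul]
  refine le_trans (Finset.abs_sum_le_sum_abs _ _) (Finset.sum_le_sum fun k _ => ?_)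
  have heq : (aR k * fR k (p k) (q k) - aI k * fI k (p k) (q k))
      - (aR k * fR k (p' k) (q' k) - aI k * fI k (p' k) (q' k))
      = aR k * (fR k (p k) (q k) - fR k (p' k) (q' k))
        - aI k * (fI k (p k) (q k) - fI k (p' k) (q' k)) := by ring
  rw [heq]
  exact term_bound (hlip k _ _ _ _) (hlip' k _ _ _ _) (hp k) (hq k)
    (hl k).1 (hl k).2.1 (hl k).2.2.1 (hl k).2.2.2

/-- "imaginary"-row variant of `row_est`. -/
lemma row_est' {n : ℕ} (aR aI lRR lRI lIR lII ξ φ : Fin n → ℝ)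
    (fR fI : Fin n → ℝ → ℝ → ℝ)
    (hl : ∀ j, 0 ≤ lRR j ∧ 0 ≤ lRI j ∧ 0 ≤ lIR j ∧ 0 ≤ lII j)
    (hlip : ∀ k x y x' y', |fR k x y - fR k x' y'| ≤ lRR k * |x - x'| + lRI k * |y - y'|)
    (hlip' : ∀ k x y x' y', |fI k x y - fI k x' y'| ≤ lIR k * |x - x'| + lII k * |y - y'|)
    (p q p' q' : Fin n → ℝ) (m : ℝ)
    (hp : ∀ k, |p k - p' k| ≤ ξ k * m) (hq : ∀ k, |q k - q' k| ≤ φ k * m) :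
    |(∑ k, (aR k * fI k (p k) (q k) + aI k * fR k (p k) (q k)))
      - ∑ k, (aR k * fI k (p' k) (q' k) + aI k * fR k (p' k) (q' k))|
      ≤ (∑ k, (ξ k * |aR k| * lIR k + φ k * |aR k| * lII k
          + ξ k * |aI k| * lRR k + φ k * |aI k| * lRI k)) * m := by
  have h := row_est aR (fun k => -aI k) lIR lII lRR lRI ξ φ fI fR
    (fun j => ⟨(hl j).2.2.1, (hl j).2.2.2, (hl j).1, (hl j).2.1⟩) hlip' hlip p q p' q' m hp hq
  simpa only [neg_mul, sub_neg_eq_add, abs_neg] using h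

lemma equilib {n : ℕ} (hn : 1 ≤ n) (d : Fin n → ℝ) (hd : ∀ j, 0 < d j)
    (aR aI bR bI : Fin n → Fin n → ℝ) (uR uI : Fin n → ℝ)
    (fR fI gR gI : Fin n → ℝ → ℝ → ℝ)
    (lRR lRI lIR lII mRR mRI mIR mII ξ φ : Fin n → ℝ)
    (hξ : ∀ j, 0 < ξ j) (hφ : ∀ j, 0 < φ j)
    (hl0 : ∀ j, 0 ≤ lRR j ∧ 0 ≤ lRI j ∧ 0 ≤ lIR j ∧ 0 ≤ lII j)
    (hm0 : ∀ j, 0 ≤ mRR j ∧ 0 ≤ mRI j ∧ 0 ≤ mIR j ∧ 0 ≤ mII j)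
    (hlipfR : ∀ k x y x' y', |fR k x y - fR k x' y'| ≤ lRR k * |x - x'| + lRI k * |y - y'|)
    (hlipfI : ∀ k x y x' y', |fI k x y - fI k x' y'| ≤ lIR k * |x - x'| + lII k * |y - y'|)
    (hlipgR : ∀ k x y x' y', |gR k x y - gR k x' y'| ≤ mRR k * |x - x'| + mRI k * |y - y'|)
    (hlipgI : ∀ k x y x' y', |gI k x y - gI k x' y'| ≤ mIR k * |x - x'| + mII k * |y - y'|)
    (hrow1 : ∀ j, (∑ k, (ξ k * |aR j k| * lRR k + φ k * |aR j k| * lRI k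
          + ξ k * |aI j k| * lIR k + φ k * |aI j k| * lII k))
        + (∑ k, (ξ k * |bR j k| * mRR k + φ k * |bR j k| * mRI k
          + ξ k * |bI j k| * mIR k + φ k * |bI j k| * mII k)) < ξ j * d j)
    (hrow2 : ∀ j, (∑ k, (ξ k * |aR j k| * lIR k + φ k * |aR j k| * lII k
          + ξ k * |aI j k| * lRR k + φ k * |aI j k| * lRI k))
        + (∑ k, (ξ k * |bR j k| * mIR k + φ k * |bR j k| * mII k
          + ξ k * |bI j k| * mRR k + φ k * |bI j k| * mRI k)) < φ j * d j) :
    ∃ zbR zbI : Fin n → ℝ,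
      IsEquilibrium n d aR aI bR bI uR uI fR fI gR gI zbR zbI ∧
      (∀ wR wI : Fin n → ℝ,
        IsEquilibrium n d aR aI bR bI uR uI fR fI gR gI wR wI → wR = zbR ∧ wI = zbI) := by
  have hne : (Finset.univ : Finset (Fin n)).Nonempty := ⟨⟨0, hn⟩, Finset.mem_univ _⟩
  set RA : Fin n → ℝ := fun j => ∑ k, (ξ k * |aR j k| * lRR k + φ k * |aR j k| * lRI k
          + ξ k * |aI j k| * lIR k + φ k * |aI j k| * lII k) with hRA
  set RB : Fin n → ℝ := fun j => ∑ k, (ξ k * |bR j k| * mRR k + φ k * |bR j k| * mRI k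
          + ξ k * |bI j k| * mIR k + φ k * |bI j k| * mII k) with hRB
  set RA' : Fin n → ℝ := fun j => ∑ k, (ξ k * |aR j k| * lIR k + φ k * |aR j k| * lII k
          + ξ k * |aI j k| * lRR k + φ k * |aI j k| * lRI k) with hRA'
  set RB' : Fin n → ℝ := fun j => ∑ k, (ξ k * |bR j k| * mIR k + φ k * |bR j k| * mII k
          + ξ k * |bI j k| * mRR k + φ k * |bI j k| * mRI k) with hRB'
  have hRA0 : ∀ j, 0 ≤ RA j := by
    intro j; apply Finset.sum_nonneg; intro k _
    have h1 := (hl0 k)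
    have e1 := mul_nonneg (mul_nonneg (hξ k).le (abs_nonneg (aR j k))) h1.1
    have e2 := mul_nonneg (mul_nonneg (hφ k).le (abs_nonneg (aR j k))) h1.2.1
    have e3 := mul_nonneg (mul_nonneg (hξ k).le (abs_nonneg (aI j k))) h1.2.2.1
    have e4 := mul_nonneg (mul_nonneg (hφ k).le (abs_nonneg (aI j k))) h1.2.2.2
    linarith
  have hRB0 : ∀ j, 0 ≤ RB j := by
    intro j; apply Finset.sum_nonneg; intro k _
    have h1 := (hm0 k)
    have e1 := mul_nonneg (mul_nonneg (hξ k).le (abs_nonneg (bR j k))) h1.1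
    have e2 := mul_nonneg (mul_nonneg (hφ k).le (abs_nonneg (bR j k))) h1.2.1
    have e3 := mul_nonneg (mul_nonneg (hξ k).le (abs_nonneg (bI j k))) h1.2.2.1
    have e4 := mul_nonneg (mul_nonneg (hφ k).le (abs_nonneg (bI j k))) h1.2.2.2
    linarith
  have hRA0' : ∀ j, 0 ≤ RA' j := by
    intro j; apply Finset.sum_nonneg; intro k _
    have h1 := (hl0 k)
    have e1 := mul_nonneg (mul_nonneg (hξ k).le (abs_nonneg (aR j k))) h1.2.2.1
    have e2 := mul_nonneg (mul_nonneg (hφ k).le (abs_nonneg (aR j k))) h1.2.2.2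
    have e3 := mul_nonneg (mul_nonneg (hξ k).le (abs_nonneg (aI j k))) h1.1
    have e4 := mul_nonneg (mul_nonneg (hφ k).le (abs_nonneg (aI j k))) h1.2.1
    linarith
  have hRB0' : ∀ j, 0 ≤ RB' j := by
    intro j; apply Finset.sum_nonneg; intro k _
    have h1 := (hm0 k)
    have e1 := mul_nonneg (mul_nonneg (hξ k).le (abs_nonneg (bR j k))) h1.2.2.1
    have e2 := mul_nonneg (mul_nonneg (hφ k).le (abs_nonneg (bR j k))) h1.2.2.2
    have e3 := mul_nonneg (mul_nonneg (hξ k).le (abs_nonneg (bI j k))) h1.1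
    have e4 := mul_nonneg (mul_nonneg (hφ k).le (abs_nonneg (bI j k))) h1.2.1
    linarith
  -- the contraction map
  set SR : (Fin n → ℝ) → (Fin n → ℝ) → Fin n → ℝ := fun p q j =>
    (∑ k, (aR j k * fR k (p k) (q k) - aI j k * fI k (p k) (q k)))
    + (∑ k, (bR j k * gR k (p k) (q k) - bI j k * gI k (p k) (q k))) + uR j with hSR
  set SI : (Fin n → ℝ) → (Fin n → ℝ) → Fin n → ℝ := fun p q j =>
    (∑ k, (aR j k * fI k (p k) (q k) + aI j k * fR k (p k) (q k)))
    + (∑ k, (bR j k * gI k (p k) (q k) + bI j k * gR k (p k) (q k))) + uI j with hSI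
  set T : ((Fin n → ℝ) × (Fin n → ℝ)) → ((Fin n → ℝ) × (Fin n → ℝ)) := fun z =>
    (fun j => SR (fun k => ξ k * z.1 k) (fun k => φ k * z.2 k) j / (d j * ξ j),
     fun j => SI (fun k => ξ k * z.1 k) (fun k => φ k * z.2 k) j / (d j * φ j)) with hT
  set q : ℝ := Finset.univ.sup' hne
    (fun j => max ((RA j + RB j) / (ξ j * d j)) ((RA' j + RB' j) / (φ j * d j))) with hqdef
  have hq0 : 0 ≤ q := by
    refine le_trans ?_ (Finset.le_sup' _ (Finset.mem_univ ⟨0, hn⟩))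
    refine le_trans ?_ (le_max_left _ _)
    exact div_nonneg (add_nonneg (hRA0 _) (hRB0 _)) (mul_pos (hξ _) (hd _)).le
  have hq1 : q < 1 := by
    rw [hqdef, Finset.sup'_lt_iff]
    intro j _
    refine max_lt ?_ ?_
    · rw [div_lt_one (mul_pos (hξ j) (hd j))]; exact hrow1 j
    · rw [div_lt_one (mul_pos (hφ j) (hd j))]; exact hrow2 j
  -- key contraction estimate
  have hcontract : ∀ z z' : (Fin n → ℝ) × (Fin n → ℝ), dist (T z) (T z') ≤ q * dist z z' := by
    intro z z'
    set m := dist z z' with hm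
    have hmnn : 0 ≤ m := dist_nonneg
    have hp : ∀ k, |ξ k * z.1 k - ξ k * z'.1 k| ≤ ξ k * m := by
      intro k
      rw [← mul_sub, abs_mul, abs_of_pos (hξ k)]
      refine mul_le_mul_of_nonneg_left ?_ (hξ k).le
      calc |z.1 k - z'.1 k| = dist (z.1 k) (z'.1 k) := (Real.dist_eq _ _).symm
        _ ≤ dist z.1 z'.1 := dist_le_pi_dist _ _ k
        _ ≤ m := by rw [hm, Prod.dist_eq]; exact le_max_left _ _
    have hq' : ∀ k, |φ k * z.2 k - φ k * z'.2 k| ≤ φ k * m := by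
      intro k
      rw [← mul_sub, abs_mul, abs_of_pos (hφ k)]
      refine mul_le_mul_of_nonneg_left ?_ (hφ k).le
      calc |z.2 k - z'.2 k| = dist (z.2 k) (z'.2 k) := (Real.dist_eq _ _).symm
        _ ≤ dist z.2 z'.2 := dist_le_pi_dist _ _ k
        _ ≤ m := by rw [hm, Prod.dist_eq]; exact le_max_right _ _
    have hcomp1 : ∀ j, dist ((T z).1 j) ((T z').1 j) ≤ (RA j + RB j) / (ξ j * d j) * m := by
      intro j
      have hA := row_est (fun k => aR j k) (fun k => aI j k) lRR lRI lIR lII ξ φ fR fI hl0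
        hlipfR hlipfI _ _ _ _ m hp hq'
      have hB := row_est (fun k => bR j k) (fun k => bI j k) mRR mRI mIR mII ξ φ gR gI hm0
        hlipgR hlipgI _ _ _ _ m hp hq'
      have hnum : |SR (fun k => ξ k * z.1 k) (fun k => φ k * z.2 k) j
          - SR (fun k => ξ k * z'.1 k) (fun k => φ k * z'.2 k) j| ≤ (RA j + RB j) * m := by
        rw [hSR]
        have htri : ∀ A B C D u : ℝ, (A + B + u) - (C + D + u) = (A - C) + (B - D) := by
          intros; ring
        rw [htri]
        calc _ ≤ _ := abs_add_le _ _
          _ ≤ RA j * m + RB j * m := add_le_add hA hB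
          _ = (RA j + RB j) * m := by ring
      rw [Real.dist_eq, hT]
      simp only
      rw [div_sub_div_same, abs_div, abs_of_pos (mul_pos (hd j) (hξ j)), div_le_iff₀ (mul_pos (hd j) (hξ j))]
      calc |SR _ _ j - SR _ _ j| ≤ (RA j + RB j) * m := hnum
        _ = (RA j + RB j) / (ξ j * d j) * m * (d j * ξ j) := by
            have h1 : ξ j ≠ 0 := (hξ j).ne'
            have h2 : d j ≠ 0 := (hd j).ne'
            field_simp
    have hcomp2 : ∀ j, dist ((T z).2 j) ((T z').2 j) ≤ (RA' j + RB' j) / (φ j * d j) * m := by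
      intro j
      have hA := row_est' (fun k => aR j k) (fun k => aI j k) lRR lRI lIR lII ξ φ fR fI hl0
        hlipfR hlipfI _ _ _ _ m hp hq'
      have hB := row_est' (fun k => bR j k) (fun k => bI j k) mRR mRI mIR mII ξ φ gR gI hm0
        hlipgR hlipgI _ _ _ _ m hp hq'
      have hnum : |SI (fun k => ξ k * z.1 k) (fun k => φ k * z.2 k) j
          - SI (fun k => ξ k * z'.1 k) (fun k => φ k * z'.2 k) j| ≤ (RA' j + RB' j) * m := by
        rw [hSI]
        have htri : ∀ A B C D u : ℝ, (A + B + u) - (C + D + u) = (A - C) + (B - D) := by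
          intros; ring
        rw [htri]
        calc _ ≤ _ := abs_add_le _ _
          _ ≤ RA' j * m + RB' j * m := add_le_add hA hB
          _ = (RA' j + RB' j) * m := by ring
      rw [Real.dist_eq, hT]
      simp only
      rw [div_sub_div_same, abs_div, abs_of_pos (mul_pos (hd j) (hφ j)), div_le_iff₀ (mul_pos (hd j) (hφ j))]
      calc |SI _ _ j - SI _ _ j| ≤ (RA' j + RB' j) * m := hnum
        _ = (RA' j + RB' j) / (φ j * d j) * m * (d j * φ j) := by
            have h1 : φ j ≠ 0 := (hφ j).ne'
            have h2 : d j ≠ 0 := (hd j).ne'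
            field_simp
    rw [Prod.dist_eq]
    refine max_le ?_ ?_
    · rw [dist_pi_le_iff (mul_nonneg hq0 hmnn)]
      intro j
      refine le_trans (hcomp1 j) ?_
      refine mul_le_mul_of_nonneg_right ?_ hmnn
      exact le_trans (le_max_left _ _) (Finset.le_sup'
        (fun j => max ((RA j + RB j) / (ξ j * d j)) ((RA' j + RB' j) / (φ j * d j)))
        (Finset.mem_univ j))
    · rw [dist_pi_le_iff (mul_nonneg hq0 hmnn)]
      intro j
      refine le_trans (hcomp2 j) ?_
      refine mul_le_mul_of_nonneg_right ?_ hmnn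
      exact le_trans (le_max_right _ _) (Finset.le_sup'
        (fun j => max ((RA j + RB j) / (ξ j * d j)) ((RA' j + RB' j) / (φ j * d j)))
        (Finset.mem_univ j))
  -- Banach fixed point
  set K : NNReal := ⟨q, hq0⟩ with hK
  have hlipT : LipschitzWith K T := LipschitzWith.of_dist_le_mul (fun x y => hcontract x y)
  have hCW : ContractingWith K T := ⟨by exact_mod_cast hq1, hlipT⟩
  obtain ⟨z, hz, -, -⟩ := hCW.exists_fixedPoint
    ((fun _ => 0, fun _ => 0) : (Fin n → ℝ) × (Fin n → ℝ)) (edist_ne_top _ _)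
  have hfix : ∀ z' : (Fin n → ℝ) × (Fin n → ℝ), T z' = z' → z' = z := by
    intro z' h'
    have h2 := hcontract z' z
    rw [h', hz] at h2
    have h3 : (0:ℝ) ≤ dist z' z := dist_nonneg
    have h4 : dist z' z = 0 := by nlinarith
    exact dist_le_zero.mp h4.le
  have hdξ : ∀ j, d j * ξ j ≠ 0 := fun j => (mul_pos (hd j) (hξ j)).ne'
  have hdφ : ∀ j, d j * φ j ≠ 0 := fun j => (mul_pos (hd j) (hφ j)).ne'
  have hz1 : ∀ j, SR (fun k => ξ k * z.1 k) (fun k => φ k * z.2 k) j = z.1 j * (d j * ξ j) := by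
    intro j
    have h1 := congrFun (congrArg Prod.fst hz) j
    rw [hT] at h1
    exact (div_eq_iff (hdξ j)).mp h1
  have hz2 : ∀ j, SI (fun k => ξ k * z.1 k) (fun k => φ k * z.2 k) j = z.2 j * (d j * φ j) := by
    intro j
    have h1 := congrFun (congrArg Prod.snd hz) j
    rw [hT] at h1
    exact (div_eq_iff (hdφ j)).mp h1
  refine ⟨fun j => ξ j * z.1 j, fun j => φ j * z.2 j, ⟨?_, ?_⟩, ?_⟩
  · intro j
    have h2 := hz1 j
    rw [hSR] at h2
    beta_reduce at h2 ⊢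
    linarith
  · intro j
    have h2 := hz2 j
    rw [hSI] at h2
    beta_reduce at h2 ⊢
    linarith
  · intro wR wI hw
    have e1 : (fun k => ξ k * (wR k / ξ k)) = wR := by
      funext k; exact mul_div_cancel₀ _ ((hξ k).ne')
    have e2 : (fun k => φ k * (wI k / φ k)) = wI := by
      funext k; exact mul_div_cancel₀ _ ((hφ k).ne')
    have hfixz' : T (fun j => wR j / ξ j, fun j => wI j / φ j)
        = (fun j => wR j / ξ j, fun j => wI j / φ j) := by
      rw [hT]
      refine Prod.ext ?_ ?_
      · funext j
        beta_reduce
        rw [e1, e2]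
        show SR wR wI j / (d j * ξ j) = wR j / ξ j
        have h3 : SR wR wI j = d j * wR j := by
          rw [hSR]; beta_reduce; linarith [hw.1 j]
        rw [h3, mul_div_mul_left _ _ (hd j).ne']
      · funext j
        beta_reduce
        rw [e1, e2]
        show SI wR wI j / (d j * φ j) = wI j / φ j
        have h3 : SI wR wI j = d j * wI j := by
          rw [hSI]; beta_reduce; linarith [hw.2 j]
        rw [h3, mul_div_mul_left _ _ (hd j).ne']
    have hzz := hfix _ hfixz'
    constructor
    · funext j
      have := congrFun (congrArg Prod.fst hzz) j
      beta_reduce at this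
      have hx : wR j / ξ j = z.1 j := this
      have h5 : wR j = ξ j * (wR j / ξ j) := (mul_div_cancel₀ _ ((hξ j).ne')).symm
      rw [h5, hx]
    · funext j
      have := congrFun (congrArg Prod.snd hzz) j
      beta_reduce at this
      have hx : wI j / φ j = z.2 j := this
      have h5 : wI j = φ j * (wI j / φ j) := (mul_div_cancel₀ _ ((hφ j).ne')).symm
      rw [h5, hx]

set_option maxHeartbeats 1000000 in
lemma decay_s2 {n : ℕ} (hn : 1 ≤ n) (d : Fin n → ℝ) (hd : ∀ j, 0 < d j)
    (aR aI bR bI τ : Fin n → Fin n → ℝ) (hτ : ∀ j k, 0 ≤ τ j k)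
    (uR uI : Fin n → ℝ)
    (fR fI gR gI : Fin n → ℝ → ℝ → ℝ)
    (lRR lRI lIR lII mRR mRI mIR mII ξ φ : Fin n → ℝ)
    (hξ : ∀ j, 0 < ξ j) (hφ : ∀ j, 0 < φ j)
    (hl0 : ∀ j, 0 ≤ lRR j ∧ 0 ≤ lRI j ∧ 0 ≤ lIR j ∧ 0 ≤ lII j)
    (hm0 : ∀ j, 0 ≤ mRR j ∧ 0 ≤ mRI j ∧ 0 ≤ mIR j ∧ 0 ≤ mII j)
    (hlipfR : ∀ k x y x' y', |fR k x y - fR k x' y'| ≤ lRR k * |x - x'| + lRI k * |y - y'|)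
    (hlipfI : ∀ k x y x' y', |fI k x y - fI k x' y'| ≤ lIR k * |x - x'| + lII k * |y - y'|)
    (hlipgR : ∀ k x y x' y', |gR k x y - gR k x' y'| ≤ mRR k * |x - x'| + mRI k * |y - y'|)
    (hlipgI : ∀ k x y x' y', |gI k x y - gI k x' y'| ≤ mIR k * |x - x'| + mII k * |y - y'|)
    (hrow1 : ∀ j, (∑ k, (ξ k * |aR j k| * lRR k + φ k * |aR j k| * lRI k
          + ξ k * |aI j k| * lIR k + φ k * |aI j k| * lII k))
        + (∑ k, (ξ k * |bR j k| * mRR k + φ k * |bR j k| * mRI k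
          + ξ k * |bI j k| * mIR k + φ k * |bI j k| * mII k)) < ξ j * d j)
    (hrow2 : ∀ j, (∑ k, (ξ k * |aR j k| * lIR k + φ k * |aR j k| * lII k
          + ξ k * |aI j k| * lRR k + φ k * |aI j k| * lRI k))
        + (∑ k, (ξ k * |bR j k| * mIR k + φ k * |bR j k| * mII k
          + ξ k * |bI j k| * mRR k + φ k * |bI j k| * mRI k)) < φ j * d j)
    (zbR zbI : Fin n → ℝ)
    (heq : IsEquilibrium n d aR aI bR bI uR uI fR fI gR gI zbR zbI)
    (zR zI : Fin n → ℝ → ℝ)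
    (hsol : IsSolution n d aR aI bR bI τ uR uI fR fI gR gI zR zI) :
    ∃ c δ : ℝ, 0 < c ∧ 0 < δ ∧ ∀ t : ℝ, 0 ≤ t →
      Real.sqrt ((∑ j, (zR j t - zbR j) ^ 2) + ∑ j, (zI j t - zbI j) ^ 2)
        ≤ c * Real.exp (-δ * t) := by
  obtain ⟨hzR, hzI, hodeR, hodeI⟩ := hsol
  have hne : (Finset.univ : Finset (Fin n)).Nonempty := ⟨⟨0, hn⟩, Finset.mem_univ _⟩
  set RA : Fin n → ℝ := fun j => ∑ k, (ξ k * |aR j k| * lRR k + φ k * |aR j k| * lRI k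
          + ξ k * |aI j k| * lIR k + φ k * |aI j k| * lII k) with hRA
  set RB : Fin n → ℝ := fun j => ∑ k, (ξ k * |bR j k| * mRR k + φ k * |bR j k| * mRI k
          + ξ k * |bI j k| * mIR k + φ k * |bI j k| * mII k) with hRB
  set RA' : Fin n → ℝ := fun j => ∑ k, (ξ k * |aR j k| * lIR k + φ k * |aR j k| * lII k
          + ξ k * |aI j k| * lRR k + φ k * |aI j k| * lRI k) with hRA'
  set RB' : Fin n → ℝ := fun j => ∑ k, (ξ k * |bR j k| * mIR k + φ k * |bR j k| * mII k
          + ξ k * |bI j k| * mRR k + φ k * |bI j k| * mRI k) with hRB'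
  set Tm : ℝ := ∑ j, ∑ k, τ j k with hTm
  have hTm0 : 0 ≤ Tm := Finset.sum_nonneg fun j _ => Finset.sum_nonneg fun k _ => hτ j k
  have hτle : ∀ j k, τ j k ≤ Tm := by
    intro j k
    calc τ j k ≤ ∑ k', τ j k' :=
          Finset.single_le_sum (fun k' _ => hτ j k') (Finset.mem_univ k)
      _ ≤ Tm := Finset.single_le_sum (f := fun j' => ∑ k', τ j' k')
          (fun j' _ => Finset.sum_nonneg fun k' _ => hτ j' k') (Finset.mem_univ j)
  -- choose δ
  have hδex : ∃ δ : ℝ, 0 < δ ∧ ∀ j,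
      ξ j * δ - ξ j * d j + RA j + Real.exp (δ * Tm) * RB j < 0 ∧
      φ j * δ - φ j * d j + RA' j + Real.exp (δ * Tm) * RB' j < 0 := by
    have h1 : ∀ j : Fin n, ∀ᶠ δ in nhds (0:ℝ),
        ξ j * δ - ξ j * d j + RA j + Real.exp (δ * Tm) * RB j < 0 ∧
        φ j * δ - φ j * d j + RA' j + Real.exp (δ * Tm) * RB' j < 0 := by
      intro j
      have hc1 : Continuous (fun δ : ℝ => ξ j * δ - ξ j * d j + RA j + Real.exp (δ * Tm) * RB j) := by
        fun_prop
      have hc2 : Continuous (fun δ : ℝ => φ j * δ - φ j * d j + RA' j + Real.exp (δ * Tm) * RB' j) := by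
        fun_prop
      have hv1 : ξ j * 0 - ξ j * d j + RA j + Real.exp (0 * Tm) * RB j < 0 := by
        simp only [mul_zero, zero_mul, Real.exp_zero, one_mul, zero_sub]
        linarith [hrow1 j]
      have hv2 : φ j * 0 - φ j * d j + RA' j + Real.exp (0 * Tm) * RB' j < 0 := by
        simp only [mul_zero, zero_mul, Real.exp_zero, one_mul, zero_sub]
        linarith [hrow2 j]
      exact (hc1.continuousAt.eventually_lt_const hv1).and
        (hc2.continuousAt.eventually_lt_const hv2)
    have hall : ∀ᶠ δ in nhds (0:ℝ), ∀ j : Fin n,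
        ξ j * δ - ξ j * d j + RA j + Real.exp (δ * Tm) * RB j < 0 ∧
        φ j * δ - φ j * d j + RA' j + Real.exp (δ * Tm) * RB' j < 0 :=
      Filter.eventually_all.mpr h1
    have hall' := hall.filter_mono (nhdsWithin_le_nhds (s := Set.Ioi (0:ℝ)))
    obtain ⟨δ, hδ1, hδ2⟩ := (hall'.and self_mem_nhdsWithin).exists
    exact ⟨δ, hδ2, hδ1⟩
  obtain ⟨δ, hδ0, hδ⟩ := hδex
  set E : ℝ := Real.exp (δ * Tm) with hE
  have hE1 : 1 ≤ E := Real.one_le_exp (by positivity)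
  -- bound the history on [-Tm, 0]
  have hbnd : ∀ j : Fin n, ∃ CRj CIj : ℝ, (∀ r ∈ Set.Icc (-Tm) 0, |zR j r - zbR j| ≤ CRj)
      ∧ (∀ r ∈ Set.Icc (-Tm) 0, |zI j r - zbI j| ≤ CIj) := by
    intro j
    obtain ⟨C1, hC1⟩ := (isCompact_Icc (a := -Tm) (b := 0)).exists_bound_of_continuousOn
      (f := fun r => zR j r - zbR j) (((hzR j).continuous.sub continuous_const).continuousOn)
    obtain ⟨C2, hC2⟩ := (isCompact_Icc (a := -Tm) (b := 0)).exists_bound_of_continuousOn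
      (f := fun r => zI j r - zbI j) (((hzI j).continuous.sub continuous_const).continuousOn)
    exact ⟨C1, C2, fun r hr => hC1 r hr, fun r hr => hC2 r hr⟩
  choose CR CI hCR hCI using hbnd
  set c1 : ℝ := 1 + ∑ j, (max (CR j) 0 / ξ j + max (CI j) 0 / φ j) with hc1def
  have hterm0 : ∀ j : Fin n, 0 ≤ max (CR j) 0 / ξ j + max (CI j) 0 / φ j := by
    intro j
    have := div_nonneg (le_max_right (CR j) 0) (hξ j).le
    have := div_nonneg (le_max_right (CI j) 0) (hφ j).le
    linarith
  have hc1 : 0 < c1 := by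
    have := Finset.sum_nonneg (fun j (_ : j ∈ Finset.univ) => hterm0 j)
    rw [hc1def]; linarith
  have hbase : ∀ r ∈ Set.Icc (-Tm) (0:ℝ), ∀ j : Fin n,
      |zR j r - zbR j| ≤ c1 * ξ j ∧ |zI j r - zbI j| ≤ c1 * φ j := by
    intro r hr j
    have hone : max (CR j) 0 / ξ j + max (CI j) 0 / φ j ≤ c1 - 1 := by
      rw [hc1def]
      have := Finset.single_le_sum (f := fun j => max (CR j) 0 / ξ j + max (CI j) 0 / φ j)
        (fun j _ => hterm0 j) (Finset.mem_univ j)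
      linarith
    constructor
    · have h1 : |zR j r - zbR j| ≤ max (CR j) 0 := le_trans (hCR j r hr) (le_max_left _ _)
      have h2 : max (CR j) 0 / ξ j ≤ c1 := by
        have := div_nonneg (le_max_right (CI j) 0) (hφ j).le
        linarith
      have h3 : max (CR j) 0 ≤ c1 * ξ j := by
        rw [div_le_iff₀ (hξ j)] at h2; linarith
      linarith
    · have h1 : |zI j r - zbI j| ≤ max (CI j) 0 := le_trans (hCI j r hr) (le_max_left _ _)
      have h2 : max (CI j) 0 / φ j ≤ c1 := by
        have := div_nonneg (le_max_right (CR j) 0) (hξ j).le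
        linarith
      have h3 : max (CI j) 0 ≤ c1 * φ j := by
        rw [div_le_iff₀ (hφ j)] at h2; linarith
      linarith
  -- the bounding set
  set B : Set ℝ := {r : ℝ | ∀ j : Fin n,
      |zR j r - zbR j| ≤ c1 * ξ j * Real.exp (-(δ * r)) ∧
      |zI j r - zbI j| ≤ c1 * φ j * Real.exp (-(δ * r))} with hBdef
  have hBclosed : IsClosed B := by
    have : B = ⋂ j : Fin n,
        ({r : ℝ | |zR j r - zbR j| ≤ c1 * ξ j * Real.exp (-(δ * r))} ∩
         {r : ℝ | |zI j r - zbI j| ≤ c1 * φ j * Real.exp (-(δ * r))}) := by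
      ext r; simp [hBdef, Set.mem_iInter, forall_and]
    rw [this]
    refine isClosed_iInter fun j => IsClosed.inter ?_ ?_
    · exact isClosed_le (((hzR j).continuous.sub continuous_const).abs) (by fun_prop)
    · exact isClosed_le (((hzI j).continuous.sub continuous_const).abs) (by fun_prop)
  have hbase' : ∀ r ∈ Set.Icc (-Tm) (0:ℝ), r ∈ B := by
    intro r hr j
    have h1 := hbase r hr j
    have hexp : (1:ℝ) ≤ Real.exp (-(δ * r)) := by
      rw [Real.one_le_exp_iff]
      have : δ * r ≤ 0 := mul_nonpos_of_nonneg_of_nonpos hδ0.le hr.2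
      linarith
    constructor
    · calc |zR j r - zbR j| ≤ c1 * ξ j := h1.1
        _ ≤ c1 * ξ j * Real.exp (-(δ * r)) := by
            nlinarith [mul_pos hc1 (hξ j)]
    · calc |zI j r - zbI j| ≤ c1 * φ j := h1.2
        _ ≤ c1 * φ j * Real.exp (-(δ * r)) := by
            nlinarith [mul_pos hc1 (hφ j)]
  -- key derivative estimate
  have hconv : ∀ (v cc r : ℝ), Real.exp (δ * r) * |v| ≤ cc → |v| ≤ cc * Real.exp (-(δ * r)) := by
    intro v cc r h
    have hp := Real.exp_pos (δ * r)
    have eh : Real.exp (δ * r) * Real.exp (-(δ * r)) = 1 := by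
      rw [← Real.exp_add]; simp
    nlinarith [abs_nonneg v, Real.exp_pos (-(δ * r))]
  have hkey : ∀ t : ℝ, 0 ≤ t → (∀ r ∈ Set.Icc (-Tm) t, r ∈ B) → ∀ j : Fin n,
      |deriv (zR j) t + d j * (zR j t - zbR j)|
        ≤ (RA j + E * RB j) * (c1 * Real.exp (-(δ * t))) ∧
      |deriv (zI j) t + d j * (zI j t - zbI j)|
        ≤ (RA' j + E * RB' j) * (c1 * Real.exp (-(δ * t))) := by
    intro t ht hbox j
    have htB := hbox t ⟨by linarith, le_refl t⟩
    have hpA : ∀ k, |zR k t - zbR k| ≤ ξ k * (c1 * Real.exp (-(δ * t))) := by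
      intro k
      calc |zR k t - zbR k| ≤ c1 * ξ k * Real.exp (-(δ * t)) := (htB k).1
        _ = ξ k * (c1 * Real.exp (-(δ * t))) := by ring
    have hqA : ∀ k, |zI k t - zbI k| ≤ φ k * (c1 * Real.exp (-(δ * t))) := by
      intro k
      calc |zI k t - zbI k| ≤ c1 * φ k * Real.exp (-(δ * t)) := (htB k).2
        _ = φ k * (c1 * Real.exp (-(δ * t))) := by ring
    have hdelay : ∀ k, (t - τ j k) ∈ Set.Icc (-Tm) t :=
      fun k => ⟨by linarith [hτle j k], by linarith [hτ j k]⟩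
    have hexpd : ∀ k : Fin n, Real.exp (-(δ * (t - τ j k))) ≤ E * Real.exp (-(δ * t)) := by
      intro k
      have h2 : Real.exp (-(δ * (t - τ j k))) = Real.exp (δ * τ j k) * Real.exp (-(δ * t)) := by
        rw [← Real.exp_add]; ring_nf
      have h3 : Real.exp (δ * τ j k) ≤ E :=
        Real.exp_le_exp.mpr (mul_le_mul_of_nonneg_left (hτle j k) hδ0.le)
      rw [h2]
      exact mul_le_mul_of_nonneg_right h3 (Real.exp_pos _).le
    have hpB : ∀ k, |zR k (t - τ j k) - zbR k| ≤ ξ k * (c1 * E * Real.exp (-(δ * t))) := by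
      intro k
      have h1 := (hbox _ (hdelay k) k).1
      have h4 := hexpd k
      have h5 : 0 ≤ c1 * ξ k := (mul_pos hc1 (hξ k)).le
      calc |zR k (t - τ j k) - zbR k| ≤ c1 * ξ k * Real.exp (-(δ * (t - τ j k))) := h1
        _ ≤ c1 * ξ k * (E * Real.exp (-(δ * t))) := mul_le_mul_of_nonneg_left h4 h5
        _ = ξ k * (c1 * E * Real.exp (-(δ * t))) := by ring
    have hqB : ∀ k, |zI k (t - τ j k) - zbI k| ≤ φ k * (c1 * E * Real.exp (-(δ * t))) := by
      intro k
      have h1 := (hbox _ (hdelay k) k).2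
      have h4 := hexpd k
      have h5 : 0 ≤ c1 * φ k := (mul_pos hc1 (hφ k)).le
      calc |zI k (t - τ j k) - zbI k| ≤ c1 * φ k * Real.exp (-(δ * (t - τ j k))) := h1
        _ ≤ c1 * φ k * (E * Real.exp (-(δ * t))) := mul_le_mul_of_nonneg_left h4 h5
        _ = φ k * (c1 * E * Real.exp (-(δ * t))) := by ring
    constructor
    · have hA := row_est (fun k => aR j k) (fun k => aI j k) lRR lRI lIR lII ξ φ fR fI hl0
        hlipfR hlipfI (fun k => zR k t) (fun k => zI k t) zbR zbI
        (c1 * Real.exp (-(δ * t))) hpA hqA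
      have hB := row_est (fun k => bR j k) (fun k => bI j k) mRR mRI mIR mII ξ φ gR gI hm0
        hlipgR hlipgI (fun k => zR k (t - τ j k)) (fun k => zI k (t - τ j k)) zbR zbI
        (c1 * E * Real.exp (-(δ * t))) hpB hqB
      beta_reduce at hA hB
      have hdiff : deriv (zR j) t + d j * (zR j t - zbR j)
          = ((∑ k, (aR j k * fR k (zR k t) (zI k t) - aI j k * fI k (zR k t) (zI k t)))
              - ∑ k, (aR j k * fR k (zbR k) (zbI k) - aI j k * fI k (zbR k) (zbI k)))
            + ((∑ k, (bR j k * gR k (zR k (t - τ j k)) (zI k (t - τ j k))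
                  - bI j k * gI k (zR k (t - τ j k)) (zI k (t - τ j k))))
              - ∑ k, (bR j k * gR k (zbR k) (zbI k) - bI j k * gI k (zbR k) (zbI k))) := by
        linear_combination (hodeR j t ht) + (heq.1 j)
      rw [hdiff]
      calc _ ≤ _ := abs_add_le _ _
        _ ≤ RA j * (c1 * Real.exp (-(δ * t))) + RB j * (c1 * E * Real.exp (-(δ * t))) :=
            add_le_add hA hB
        _ = (RA j + E * RB j) * (c1 * Real.exp (-(δ * t))) := by ring
    · have hA := row_est' (fun k => aR j k) (fun k => aI j k) lRR lRI lIR lII ξ φ fR fI hl0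
        hlipfR hlipfI (fun k => zR k t) (fun k => zI k t) zbR zbI
        (c1 * Real.exp (-(δ * t))) hpA hqA
      have hB := row_est' (fun k => bR j k) (fun k => bI j k) mRR mRI mIR mII ξ φ gR gI hm0
        hlipgR hlipgI (fun k => zR k (t - τ j k)) (fun k => zI k (t - τ j k)) zbR zbI
        (c1 * E * Real.exp (-(δ * t))) hpB hqB
      beta_reduce at hA hB
      have hdiff : deriv (zI j) t + d j * (zI j t - zbI j)
          = ((∑ k, (aR j k * fI k (zR k t) (zI k t) + aI j k * fR k (zR k t) (zI k t)))
              - ∑ k, (aR j k * fI k (zbR k) (zbI k) + aI j k * fR k (zbR k) (zbI k)))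
            + ((∑ k, (bR j k * gI k (zR k (t - τ j k)) (zI k (t - τ j k))
                  + bI j k * gR k (zR k (t - τ j k)) (zI k (t - τ j k))))
              - ∑ k, (bR j k * gI k (zbR k) (zbI k) + bI j k * gR k (zbR k) (zbI k))) := by
        linear_combination (hodeI j t ht) + (heq.2 j)
      rw [hdiff]
      calc _ ≤ _ := abs_add_le _ _
        _ ≤ RA' j * (c1 * Real.exp (-(δ * t))) + RB' j * (c1 * E * Real.exp (-(δ * t))) :=
            add_le_add hA hB
        _ = (RA' j + E * RB' j) * (c1 * Real.exp (-(δ * t))) := by ring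
  -- continuous induction
  set C : Set ℝ := {t : ℝ | Set.Icc (0:ℝ) t ⊆ B} with hCdef
  have h0B : (0:ℝ) ∈ B := hbase' 0 ⟨neg_nonpos.mpr hTm0, le_refl 0⟩
  have h0C : (0:ℝ) ∈ C := by
    intro r hr
    have : r = 0 := le_antisymm hr.2 hr.1
    rwa [this]
  have hCclosed : ∀ b : ℝ, IsClosed (C ∩ Set.Icc 0 b) := by
    intro b
    apply IsSeqClosed.isClosed
    intro u p hu hup
    constructor
    · intro r hr
      rcases lt_or_eq_of_le hr.2 with hlt | heqr
      · obtain ⟨m, hm⟩ := (hup.eventually_const_lt hlt).exists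
        exact (hu m).1 ⟨hr.1, hm.le⟩
      · rw [heqr]
        exact hBclosed.mem_of_tendsto hup
          (Filter.Eventually.of_forall fun m => (hu m).1 ⟨(hu m).2.1, le_refl _⟩)
    · exact isClosed_Icc.mem_of_tendsto hup (Filter.Eventually.of_forall fun m => (hu m).2)
  have hmainC : ∀ t : ℝ, 0 ≤ t → t ∈ C := by
    intro t ht
    have hsub : Set.Icc (0:ℝ) t ⊆ C := by
      refine IsClosed.Icc_subset_of_forall_mem_nhdsWithin (hCclosed t) h0C ?_
      rintro s ⟨hsC, hs0, hst⟩
      have hbox : ∀ r ∈ Set.Icc (-Tm) s, r ∈ B := by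
        intro r hr
        rcases le_or_gt r 0 with h | h
        · exact hbase' r ⟨hr.1, h⟩
        · exact hsC ⟨h.le, hr.2⟩
      have hkey' := hkey s hs0 hbox
      have hsB : s ∈ B := hbox s ⟨by linarith, le_refl s⟩
      have hevj : ∀ j : Fin n, ∀ᶠ r in nhdsWithin s (Set.Ioi s),
          (|zR j r - zbR j| ≤ c1 * ξ j * Real.exp (-(δ * r)) ∧
           |zI j r - zbI j| ≤ c1 * φ j * Real.exp (-(δ * r))) := by
        intro j
        have hexps := Real.exp_pos (δ * s)
        have eh : Real.exp (δ * s) * Real.exp (-(δ * s)) = 1 := by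
          rw [← Real.exp_add]; simp
        -- real part
        have hder1 : HasDerivAt (fun r => Real.exp (δ * r) * (zR j r - zbR j))
            (Real.exp (δ * s) * δ * (zR j s - zbR j) + Real.exp (δ * s) * deriv (zR j) s) s := by
          have h1 : HasDerivAt (fun r : ℝ => δ * r) δ s := by
            simpa using (hasDerivAt_id s).const_mul δ
          have h3 : HasDerivAt (fun r => zR j r - zbR j) (deriv (zR j) s) s :=
            (((hzR j).differentiable one_ne_zero s).hasDerivAt).sub_const _
          exact h1.exp.mul h3
        have hle1 : |Real.exp (δ * s) * (zR j s - zbR j)| ≤ c1 * ξ j := by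
          rw [abs_mul, abs_of_pos hexps]
          calc Real.exp (δ * s) * |zR j s - zbR j|
              ≤ Real.exp (δ * s) * (c1 * ξ j * Real.exp (-(δ * s))) :=
                mul_le_mul_of_nonneg_left (hsB j).1 hexps.le
            _ = c1 * ξ j * (Real.exp (δ * s) * Real.exp (-(δ * s))) := by ring
            _ = c1 * ξ j := by rw [eh, mul_one]
        have hbd1 := (hkey' j).1
        have hev1 : ∀ᶠ r in nhdsWithin s (Set.Ioi s),
            |Real.exp (δ * r) * (zR j r - zbR j)| ≤ c1 * ξ j := by
          refine eventually_abs_le (mul_pos hc1 (hξ j)) hder1 hle1 ?_ ?_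
          · intro hws
            have hx : zR j s - zbR j = c1 * ξ j * Real.exp (-(δ * s)) := by
              linear_combination Real.exp (-(δ * s)) * hws - (zR j s - zbR j) * eh
            rw [hx] at hbd1 ⊢
            have habs := abs_le.mp hbd1
            have hneg := mul_neg_of_neg_of_pos (hδ j).1 (mul_pos hc1 (Real.exp_pos (-(δ * s))))
            have hfac : Real.exp (δ * s) * δ * (c1 * ξ j * Real.exp (-(δ * s)))
                + Real.exp (δ * s) * deriv (zR j) s
                = Real.exp (δ * s) * (δ * (c1 * ξ j * Real.exp (-(δ * s))) + deriv (zR j) s) := by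
              ring
            rw [hfac]
            apply mul_neg_of_pos_of_neg hexps
            nlinarith [habs.2, hneg]
          · intro hws
            have hx : zR j s - zbR j = -(c1 * ξ j * Real.exp (-(δ * s))) := by
              linear_combination Real.exp (-(δ * s)) * hws - (zR j s - zbR j) * eh
            rw [hx] at hbd1 ⊢
            have habs := abs_le.mp hbd1
            have hneg := mul_neg_of_neg_of_pos (hδ j).1 (mul_pos hc1 (Real.exp_pos (-(δ * s))))
            have hfac : Real.exp (δ * s) * δ * (-(c1 * ξ j * Real.exp (-(δ * s))))
                + Real.exp (δ * s) * deriv (zR j) s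
                = Real.exp (δ * s) * (δ * (-(c1 * ξ j * Real.exp (-(δ * s)))) + deriv (zR j) s) := by
              ring
            rw [hfac]
            apply mul_pos hexps
            nlinarith [habs.1, hneg]
        -- imaginary part
        have hder2 : HasDerivAt (fun r => Real.exp (δ * r) * (zI j r - zbI j))
            (Real.exp (δ * s) * δ * (zI j s - zbI j) + Real.exp (δ * s) * deriv (zI j) s) s := by
          have h1 : HasDerivAt (fun r : ℝ => δ * r) δ s := by
            simpa using (hasDerivAt_id s).const_mul δ
          have h3 : HasDerivAt (fun r => zI j r - zbI j) (deriv (zI j) s) s :=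
            (((hzI j).differentiable one_ne_zero s).hasDerivAt).sub_const _
          exact h1.exp.mul h3
        have hle2 : |Real.exp (δ * s) * (zI j s - zbI j)| ≤ c1 * φ j := by
          rw [abs_mul, abs_of_pos hexps]
          calc Real.exp (δ * s) * |zI j s - zbI j|
              ≤ Real.exp (δ * s) * (c1 * φ j * Real.exp (-(δ * s))) :=
                mul_le_mul_of_nonneg_left (hsB j).2 hexps.le
            _ = c1 * φ j * (Real.exp (δ * s) * Real.exp (-(δ * s))) := by ring
            _ = c1 * φ j := by rw [eh, mul_one]
        have hbd2 := (hkey' j).2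
        have hev2 : ∀ᶠ r in nhdsWithin s (Set.Ioi s),
            |Real.exp (δ * r) * (zI j r - zbI j)| ≤ c1 * φ j := by
          refine eventually_abs_le (mul_pos hc1 (hφ j)) hder2 hle2 ?_ ?_
          · intro hws
            have hx : zI j s - zbI j = c1 * φ j * Real.exp (-(δ * s)) := by
              linear_combination Real.exp (-(δ * s)) * hws - (zI j s - zbI j) * eh
            rw [hx] at hbd2 ⊢
            have habs := abs_le.mp hbd2
            have hneg := mul_neg_of_neg_of_pos (hδ j).2 (mul_pos hc1 (Real.exp_pos (-(δ * s))))
            have hfac : Real.exp (δ * s) * δ * (c1 * φ j * Real.exp (-(δ * s)))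
                + Real.exp (δ * s) * deriv (zI j) s
                = Real.exp (δ * s) * (δ * (c1 * φ j * Real.exp (-(δ * s))) + deriv (zI j) s) := by
              ring
            rw [hfac]
            apply mul_neg_of_pos_of_neg hexps
            nlinarith [habs.2, hneg]
          · intro hws
            have hx : zI j s - zbI j = -(c1 * φ j * Real.exp (-(δ * s))) := by
              linear_combination Real.exp (-(δ * s)) * hws - (zI j s - zbI j) * eh
            rw [hx] at hbd2 ⊢
            have habs := abs_le.mp hbd2
            have hneg := mul_neg_of_neg_of_pos (hδ j).2 (mul_pos hc1 (Real.exp_pos (-(δ * s))))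
            have hfac : Real.exp (δ * s) * δ * (-(c1 * φ j * Real.exp (-(δ * s))))
                + Real.exp (δ * s) * deriv (zI j) s
                = Real.exp (δ * s) * (δ * (-(c1 * φ j * Real.exp (-(δ * s)))) + deriv (zI j) s) := by
              ring
            rw [hfac]
            apply mul_pos hexps
            nlinarith [habs.1, hneg]
        filter_upwards [hev1, hev2] with r h1 h2
        constructor
        · refine hconv _ _ _ ?_
          rw [abs_mul, abs_of_pos (Real.exp_pos (δ * r))] at h1
          exact h1
        · refine hconv _ _ _ ?_
          rw [abs_mul, abs_of_pos (Real.exp_pos (δ * r))] at h2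
          exact h2
      have hevB : ∀ᶠ r in nhdsWithin s (Set.Ioi s), r ∈ B :=
        (Filter.eventually_all.mpr hevj).mono fun r hr => hr
      obtain ⟨ε, hε, hsubB⟩ := Metric.mem_nhdsWithin_iff.mp hevB
      refine Metric.mem_nhdsWithin_iff.mpr ⟨ε, hε, ?_⟩
      rintro r ⟨hrball, hrIoi⟩
      intro r' hr'
      rcases le_or_gt r' s with h | h
      · exact hsC ⟨hr'.1, h⟩
      · refine hsubB ⟨?_, h⟩
        rw [Metric.mem_ball, Real.dist_eq]
        rw [Metric.mem_ball, Real.dist_eq] at hrball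
        have hsr : s < r := hrIoi
        have hsr' : s < r' := h
        rw [abs_of_pos (sub_pos.mpr hsr)] at hrball
        rw [abs_of_pos (sub_pos.mpr hsr')]
        linarith [hr'.2]
    exact hsub ⟨ht, le_refl t⟩
  have hmainB : ∀ t : ℝ, 0 ≤ t → t ∈ B := fun t ht => hmainC t ht ⟨ht, le_refl t⟩
  -- conclusion
  set S : ℝ := (∑ j, (ξ j)^2) + ∑ j, (φ j)^2 with hSdef
  have hS : 0 < S := by
    have h1 : 0 < ∑ j, (ξ j)^2 := Finset.sum_pos (fun j _ => pow_pos (hξ j) 2) hne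
    have h2 : 0 ≤ ∑ j, (φ j)^2 := Finset.sum_nonneg fun j _ => sq_nonneg _
    rw [hSdef]; linarith
  have hsqrtS : 0 < Real.sqrt S := Real.sqrt_pos.mpr hS
  refine ⟨c1 * Real.sqrt S, δ, mul_pos hc1 hsqrtS, hδ0, ?_⟩
  intro t ht
  have htB := hmainB t ht
  set e : ℝ := Real.exp (-(δ * t)) with hedef
  have he : 0 < e := Real.exp_pos _
  have h1 : ∀ j : Fin n, (zR j t - zbR j)^2 ≤ c1^2 * e^2 * (ξ j)^2 := by
    intro j
    have hb := (htB j).1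
    calc (zR j t - zbR j)^2 = |zR j t - zbR j|^2 := (sq_abs _).symm
      _ ≤ (c1 * ξ j * e)^2 := pow_le_pow_left₀ (abs_nonneg _) hb 2
      _ = c1^2 * e^2 * (ξ j)^2 := by ring
  have h2 : ∀ j : Fin n, (zI j t - zbI j)^2 ≤ c1^2 * e^2 * (φ j)^2 := by
    intro j
    have hb := (htB j).2
    calc (zI j t - zbI j)^2 = |zI j t - zbI j|^2 := (sq_abs _).symm
      _ ≤ (c1 * φ j * e)^2 := pow_le_pow_left₀ (abs_nonneg _) hb 2
      _ = c1^2 * e^2 * (φ j)^2 := by ring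
  have hsum : (∑ j, (zR j t - zbR j)^2) + ∑ j, (zI j t - zbI j)^2
      ≤ (c1 * Real.sqrt S * Real.exp (-δ * t))^2 := by
    have e1 : (∑ j, (zR j t - zbR j)^2) ≤ ∑ j, c1^2 * e^2 * (ξ j)^2 :=
      Finset.sum_le_sum fun j _ => h1 j
    have e2 : (∑ j, (zI j t - zbI j)^2) ≤ ∑ j, c1^2 * e^2 * (φ j)^2 :=
      Finset.sum_le_sum fun j _ => h2 j
    have e3 : (∑ j, c1^2 * e^2 * (ξ j)^2) + (∑ j, c1^2 * e^2 * (φ j)^2)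
        = c1^2 * e^2 * S := by
      rw [← Finset.mul_sum, ← Finset.mul_sum, hSdef]; ring
    have e4 : (c1 * Real.sqrt S * Real.exp (-δ * t))^2 = c1^2 * e^2 * S := by
      have : Real.exp (-δ * t) = e := by rw [hedef, neg_mul]
      rw [this, mul_pow, mul_pow, Real.sq_sqrt hS.le]; ring
    rw [e4]; linarith
  calc Real.sqrt ((∑ j, (zR j t - zbR j)^2) + ∑ j, (zI j t - zbI j)^2)
      ≤ Real.sqrt ((c1 * Real.sqrt S * Real.exp (-δ * t))^2) := Real.sqrt_le_sqrt hsum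
    _ = c1 * Real.sqrt S * Real.exp (-δ * t) := Real.sqrt_sq (by positivity)


set_option maxHeartbeats 1000000 in
theorem stmt2
    (n : ℕ) (hn : 1 ≤ n)
    (d : Fin n → ℝ) (hd : ∀ j, 0 < d j)
    (aR aI bR bI τ : Fin n → Fin n → ℝ) (hτ : ∀ j k, 0 ≤ τ j k)
    (uR uI : Fin n → ℝ)
    (fR fI gR gI : Fin n → ℝ → ℝ → ℝ)
    (lRR lRI lIR lII mRR mRI mIR mII : Fin n → ℝ)
    (hl : ∀ j, 0 < lRR j ∧ 0 < lRI j ∧ 0 < lIR j ∧ 0 < lII j)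
    (hm : ∀ j, 0 < mRR j ∧ 0 < mRI j ∧ 0 < mIR j ∧ 0 < mII j)
    (hf : ∀ j, CondH2 (fR j) (fI j) (lRR j) (lRI j) (lIR j) (lII j))
    (hg : ∀ j, CondH2 (gR j) (gI j) (mRR j) (mRI j) (mIR j) (mII j))
    (ξ φ : Fin n → ℝ) (hξ : ∀ j, 0 < ξ j) (hφ : ∀ j, 0 < φ j)
    (hT5 : ∀ j : Fin n,
      -(ξ j) * d j
      + (∑ k, ξ k * |aR j k| * lRR k) + (∑ k, φ k * |aR j k| * lRI k)
      + (∑ k, ξ k * |aI j k| * lIR k) + (∑ k, φ k * |aI j k| * lII k)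
      + (∑ k, ξ k * |bR j k| * mRR k) + (∑ k, φ k * |bR j k| * mRI k)
      + (∑ k, ξ k * |bI j k| * mIR k) + (∑ k, φ k * |bI j k| * mII k) < 0)
    (hT6 : ∀ j : Fin n,
      -(φ j) * d j
      + (∑ k, ξ k * |aR j k| * lIR k) + (∑ k, φ k * |aR j k| * lII k)
      + (∑ k, ξ k * |aI j k| * lRR k) + (∑ k, φ k * |aI j k| * lRI k)
      + (∑ k, ξ k * |bR j k| * mIR k) + (∑ k, φ k * |bR j k| * mII k)
      + (∑ k, ξ k * |bI j k| * mRR k) + (∑ k, φ k * |bI j k| * mRI k) < 0)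
    (hsol : ∃ zR zI, IsSolution n d aR aI bR bI τ uR uI fR fI gR gI zR zI) :
    ∃ zbR zbI : Fin n → ℝ,
      IsEquilibrium n d aR aI bR bI uR uI fR fI gR gI zbR zbI ∧
      (∀ wR wI : Fin n → ℝ,
        IsEquilibrium n d aR aI bR bI uR uI fR fI gR gI wR wI → wR = zbR ∧ wI = zbI) ∧
      (∀ zR zI : Fin n → ℝ → ℝ,
        IsSolution n d aR aI bR bI τ uR uI fR fI gR gI zR zI →
        ∃ c δ : ℝ, 0 < c ∧ 0 < δ ∧ ∀ t : ℝ, 0 ≤ t →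
          Real.sqrt ((∑ j, (zR j t - zbR j) ^ 2) + ∑ j, (zI j t - zbI j) ^ 2)
            ≤ c * Real.exp (-δ * t)) := by

  have hl0 : ∀ j, 0 ≤ lRR j ∧ 0 ≤ lRI j ∧ 0 ≤ lIR j ∧ 0 ≤ lII j :=
    fun j => ⟨(hl j).1.le, (hl j).2.1.le, (hl j).2.2.1.le, (hl j).2.2.2.le⟩
  have hm0 : ∀ j, 0 ≤ mRR j ∧ 0 ≤ mRI j ∧ 0 ≤ mIR j ∧ 0 ≤ mII j :=
    fun j => ⟨(hm j).1.le, (hm j).2.1.le, (hm j).2.2.1.le, (hm j).2.2.2.le⟩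
  have hlipfR : ∀ k x y x' y', |fR k x y - fR k x' y'| ≤ lRR k * |x - x'| + lRI k * |y - y'| :=
    fun k => lip2 (hf k).1 (fun x y => ((hf k).2.2 x y).1) (fun x y => ((hf k).2.2 x y).2.1)
  have hlipfI : ∀ k x y x' y', |fI k x y - fI k x' y'| ≤ lIR k * |x - x'| + lII k * |y - y'| :=
    fun k => lip2 (hf k).2.1 (fun x y => ((hf k).2.2 x y).2.2.1) (fun x y => ((hf k).2.2 x y).2.2.2)
  have hlipgR : ∀ k x y x' y', |gR k x y - gR k x' y'| ≤ mRR k * |x - x'| + mRI k * |y - y'| :=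
    fun k => lip2 (hg k).1 (fun x y => ((hg k).2.2 x y).1) (fun x y => ((hg k).2.2 x y).2.1)
  have hlipgI : ∀ k x y x' y', |gI k x y - gI k x' y'| ≤ mIR k * |x - x'| + mII k * |y - y'| :=
    fun k => lip2 (hg k).2.1 (fun x y => ((hg k).2.2 x y).2.2.1) (fun x y => ((hg k).2.2 x y).2.2.2)
  have hsplit : ∀ (F1 F2 F3 F4 : Fin n → ℝ),
      ∑ k, (F1 k + F2 k + F3 k + F4 k)
        = (∑ k, F1 k) + (∑ k, F2 k) + (∑ k, F3 k) + (∑ k, F4 k) := by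
    intros F1 F2 F3 F4
    rw [Finset.sum_add_distrib, Finset.sum_add_distrib, Finset.sum_add_distrib]
  have hrow1 : ∀ j, (∑ k, (ξ k * |aR j k| * lRR k + φ k * |aR j k| * lRI k
        + ξ k * |aI j k| * lIR k + φ k * |aI j k| * lII k))
      + (∑ k, (ξ k * |bR j k| * mRR k + φ k * |bR j k| * mRI k
        + ξ k * |bI j k| * mIR k + φ k * |bI j k| * mII k)) < ξ j * d j := by
    intro j
    rw [hsplit, hsplit]
    have := hT5 j
    linarith
  have hrow2 : ∀ j, (∑ k, (ξ k * |aR j k| * lIR k + φ k * |aR j k| * lII k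
        + ξ k * |aI j k| * lRR k + φ k * |aI j k| * lRI k))
      + (∑ k, (ξ k * |bR j k| * mIR k + φ k * |bR j k| * mII k
        + ξ k * |bI j k| * mRR k + φ k * |bI j k| * mRI k)) < φ j * d j := by
    intro j
    rw [hsplit, hsplit]
    have := hT6 j
    linarith
  obtain ⟨zbR, zbI, heqb, huniq⟩ := equilib hn d hd aR aI bR bI uR uI fR fI gR gI
    lRR lRI lIR lII mRR mRI mIR mII ξ φ hξ hφ hl0 hm0
    hlipfR hlipfI hlipgR hlipgI hrow1 hrow2
  refine ⟨zbR, zbI, heqb, huniq, ?_⟩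
  intro zR zI hsol'
  exact decay_s2 hn d hd aR aI bR bI τ hτ uR uI fR fI gR gI
    lRR lRI lIR lII mRR mRI mIR mII ξ φ hξ hφ hl0 hm0
    hlipfR hlipfI hlipgR hlipgI hrow1 hrow2 zbR zbI heqb zR zI hsol'
end
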